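/- arXiv:1608.00830 — 4 statements merged into one kernel-verified Lean document; each statement's English description precedes it below -/
import Mathlib

section
/- Let g_1,...,g_N be independent standard Gaussian random variables and 1 ≤ ℓ ≤ N. If log(N/ℓ) ≤ q ≤ log N, then ( (1/ℓ) E[ Σ_{k=1}^ℓ (k-th largest of |g_i|)^q ] )^{1/q} is bounded above and below by absolute constant multiples of √q. -/
open MeasureTheory ProbabilityTheory Finset Pointwise

/-- `kmax v k` is the `k`-th largest element (1-indexed) of the values `v 0, …, v (N-1)`. -/
noncomputable def kmax {N : ℕ} (v : Fin N → ℝ) (k : ℕ) : ℝ :=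
  (Multiset.sort (Multiset.ofList (List.ofFn v)) (· ≤ ·)).getD (N - k) 0

/-- Standard inner product on `ℝⁿ`. -/
noncomputable def ip {n : ℕ} (x y : Fin n → ℝ) : ℝ := ∑ j, x j * y j

/-- `hS X ℓ q θ = ((1/ℓ) ∑_{k=1}^ℓ (k-max_i |⟨X i, θ⟩|)^q)^{1/q}`. -/
noncomputable def hS {n N : ℕ} (X : Fin N → (Fin n → ℝ)) (ℓ : ℕ) (q : ℝ)
    (θ : Fin n → ℝ) : ℝ :=
  ((ℓ : ℝ)⁻¹ * ∑ k ∈ Finset.Icc 1 ℓ, kmax (fun i => |ip (X i) θ|) k ^ q) ^ (1/q)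
namespace Stmt7Aux

open Real
open scoped ENNReal NNReal

/-! ### Deterministic facts about sorted lists -/

variable {N : ℕ} (v : Fin N → ℝ)

/-- the sorted (ascending) list of values of `v`. -/
noncomputable def L : List ℝ := Multiset.sort (Multiset.ofList (List.ofFn v)) (· ≤ ·)

lemma length_L : (L v).length = N := by
  rw [L, Multiset.length_sort]
  simp

lemma perm_L : (L v).Perm (List.ofFn v) := by
  have := Multiset.sort_eq (Multiset.ofList (List.ofFn v)) (· ≤ ·)
  exact Multiset.coe_eq_coe.mp this

lemma sorted_L : (L v).Pairwise (· ≤ ·) := Multiset.pairwise_sort _ _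

lemma mem_L_nonneg (hv : ∀ i, 0 ≤ v i) {x : ℝ} (hx : x ∈ L v) : 0 ≤ x := by
  have := (perm_L v).mem_iff.mp hx
  rw [List.mem_ofFn] at this
  obtain ⟨i, rfl⟩ := this
  exact hv i

lemma getD_nonneg (hv : ∀ i, 0 ≤ v i) (j : ℕ) : 0 ≤ (L v).getD j 0 := by
  rcases lt_or_ge j (L v).length with h | h
  · rw [List.getD_eq_getElem _ _ h]
    exact mem_L_nonneg v hv (List.getElem_mem h)
  · rw [List.getD_eq_default _ _ h]

lemma getD_mono {i j : ℕ} (hij : i ≤ j) (hj : j < N) :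
    (L v).getD i 0 ≤ (L v).getD j 0 := by
  have hj' : j < (L v).length := by rw [length_L]; exact hj
  have hi' : i < (L v).length := lt_of_le_of_lt hij hj'
  rw [List.getD_eq_getElem _ _ hi', List.getD_eq_getElem _ _ hj']
  exact (sorted_L v).rel_get_of_le (a := ⟨i, hi'⟩) (b := ⟨j, hj'⟩) hij

lemma kmax_eq_getD (k : ℕ) : kmax v k = (L v).getD (N - k) 0 := rfl

lemma kmax_nonneg (hv : ∀ i, 0 ≤ v i) (k : ℕ) : 0 ≤ kmax v k :=
  getD_nonneg v hv _

/-! ### Sums over lists -/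

lemma list_sum_eq (l : List ℝ) : l.sum = ∑ j ∈ range l.length, l.getD j 0 := by
  induction l with
  | nil => simp
  | cons a l ih =>
      rw [List.length_cons, Finset.sum_range_succ']
      simp only [List.getD_cons_succ, List.getD_cons_zero, List.sum_cons, ← ih]
      ring

lemma sum_getD_eq (l : List ℝ) (hp : l.Perm (List.ofFn v)) (hl : l.length = N)
    (f : ℝ → ℝ) : ∑ j ∈ range N, f (l.getD j 0) = ∑ i, f (v i) := by
  have h2 : ∀ j ∈ range N, f (l.getD j 0) = (l.map f).getD j 0 := by
    intro j hj
    rw [Finset.mem_range] at hj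
    have hj' : j < l.length := by omega
    rw [List.getD_eq_getElem _ _ hj', List.getD_eq_getElem _ _ (by simpa using hj'),
      List.getElem_map]
  rw [Finset.sum_congr rfl h2]
  have hlen : (l.map f).length = N := by simp [hl]
  have h3 : ∑ x ∈ range N, (l.map f).getD x 0 = (l.map f).sum := by
    rw [list_sum_eq, hlen]
  rw [h3, (hp.map f).sum_eq, List.map_ofFn, List.sum_ofFn]
  simp

/-! ### Reindexing and sorted-sum inequalities -/

lemma sum_sub_reindex (f : ℕ → ℝ) {N ℓ : ℕ} (hℓ : ℓ ≤ N) :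
    ∑ k ∈ Icc 1 ℓ, f (N - k) = ∑ j ∈ Ico (N - ℓ) N, f j := by
  refine Finset.sum_nbij' (fun k => N - k) (fun j => N - j) ?_ ?_ ?_ ?_ ?_
  · intro k hk
    rw [Finset.mem_Icc] at hk
    rw [Finset.mem_Ico]
    omega
  · intro j hj
    rw [Finset.mem_Ico] at hj
    rw [Finset.mem_Icc]
    omega
  · intro k hk; rw [Finset.mem_Icc] at hk; omega
  · intro j hj; rw [Finset.mem_Ico] at hj; omega
  · intro k _; rfl

lemma top_le_total (F : ℕ → ℝ) (hF : ∀ j, 0 ≤ F j) {N ℓ : ℕ} :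
    ∑ j ∈ Ico (N - ℓ) N, F j ≤ ∑ j ∈ range N, F j := by
  apply Finset.sum_le_sum_of_subset_of_nonneg
  · intro j hj
    rw [Finset.mem_Ico] at hj
    rw [Finset.mem_range]
    omega
  · intro j _ _; exact hF j

lemma total_le_top {N ℓ : ℕ} (F : ℕ → ℝ) (hF : ∀ j, 0 ≤ F j)
    (hmono : ∀ i j, i ≤ j → j < N → F i ≤ F j) (h1 : 1 ≤ ℓ) (hℓ : ℓ ≤ N) :
    (ℓ : ℝ) * ∑ j ∈ range N, F j ≤ (N : ℝ) * ∑ j ∈ Ico (N - ℓ) N, F j := by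
  set m := N - ℓ with hm
  have hmN : m + ℓ = N := by omega
  have hsplit : ∑ j ∈ range N, F j = ∑ j ∈ range m, F j + ∑ j ∈ Ico m N, F j := by
    rw [Finset.range_eq_Ico, ← Finset.sum_Ico_consecutive _ (Nat.zero_le m) (by omega : m ≤ N),
      ← Finset.range_eq_Ico]
  set S1 := ∑ j ∈ range m, F j with hS1
  set S2 := ∑ j ∈ Ico m N, F j with hS2
  have hS2card : (Ico m N).card = ℓ := by rw [Nat.card_Ico]; omega
  have key : (ℓ : ℝ) * S1 ≤ (m : ℝ) * S2 := by
    rcases Nat.eq_zero_or_pos m with h0 | hmpos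
    · have : S1 = 0 := by rw [hS1, h0]; simp
      rw [this, h0]
      simp
    · have hmlt : m < N := by omega
      have hS1le : S1 ≤ (m : ℝ) * F m := by
        calc S1 ≤ ∑ _j ∈ range m, F m :=
              Finset.sum_le_sum fun j hj => hmono j m (le_of_lt (Finset.mem_range.mp hj)) hmlt
          _ = (m : ℝ) * F m := by rw [Finset.sum_const, Finset.card_range]; simp
      have hS2ge : (ℓ : ℝ) * F m ≤ S2 := by
        calc (ℓ : ℝ) * F m = ∑ _j ∈ Ico m N, F m := by
              rw [Finset.sum_const, hS2card]; simp
          _ ≤ S2 := Finset.sum_le_sum fun j hj => by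
              have := Finset.mem_Ico.mp hj
              exact hmono m j this.1 this.2
      calc (ℓ : ℝ) * S1 ≤ (ℓ : ℝ) * ((m : ℝ) * F m) := by
            apply mul_le_mul_of_nonneg_left hS1le (by positivity)
        _ = (m : ℝ) * ((ℓ : ℝ) * F m) := by ring
        _ ≤ (m : ℝ) * S2 := mul_le_mul_of_nonneg_left hS2ge (by positivity)
  have hNm : (N : ℝ) = (m : ℝ) + (ℓ : ℝ) := by
    push_cast [← hmN]
    ring
  have hS2nonneg : 0 ≤ S2 := Finset.sum_nonneg fun j _ => hF j
  rw [hsplit, hNm]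
  nlinarith [key, hS2nonneg]

/-! ### Counting characterization and measurability of `kmax` -/

lemma countP_eq_sum (p : ℝ → Prop) [DecidablePred p] (l : List ℝ) :
    (l.countP (fun x => decide (p x)) : ℕ) =
      ∑ j ∈ range l.length, if p (l.getD j 0) then 1 else 0 := by
  induction l with
  | nil => simp
  | cons a l ih =>
      rw [List.countP_cons, List.length_cons, Finset.sum_range_succ']
      simp only [List.getD_cons_succ, List.getD_cons_zero, ih]
      by_cases h : p a <;> simp [h]

lemma card_filter_eq_countP (p : ℝ → Prop) [DecidablePred p] :
    (univ.filter fun i => p (v i)).card = (List.ofFn v).countP (fun x => decide (p x)) := by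
  rw [countP_eq_sum, Finset.card_filter, List.length_ofFn]
  rw [← Fin.sum_univ_eq_sum_range (fun j => if p ((List.ofFn v).getD j 0) then 1 else 0) N]
  refine Finset.sum_congr rfl fun i _ => ?_
  congr 1
  rw [List.getD_eq_getElem _ _ (by simpa using i.isLt), List.getElem_ofFn]

lemma lt_card_iff_getD_le (l : List ℝ) (hs : l.Pairwise (· ≤ ·)) {j : ℕ} (hj : j < l.length)
    (t : ℝ) :
    l.getD j 0 ≤ t ↔ j < ((range l.length).filter fun i => l.getD i 0 ≤ t).card := by
  set S := (range l.length).filter fun i => l.getD i 0 ≤ t with hS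
  have hmono : ∀ a b : ℕ, a ≤ b → b < l.length → l.getD a 0 ≤ l.getD b 0 := by
    intro a b hab hb
    rw [List.getD_eq_getElem _ _ (lt_of_le_of_lt hab hb), List.getD_eq_getElem _ _ hb]
    exact hs.rel_get_of_le (a := ⟨a, lt_of_le_of_lt hab hb⟩) (b := ⟨b, hb⟩) hab
  constructor
  · intro h
    have hsub : range (j + 1) ⊆ S := by
      intro i hi
      rw [Finset.mem_range] at hi
      rw [hS, Finset.mem_filter, Finset.mem_range]
      exact ⟨by omega, le_trans (hmono i j (by omega) hj) h⟩
    have := Finset.card_le_card hsub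
    rw [Finset.card_range] at this
    omega
  · intro h
    by_contra hnot
    have hsub : S ⊆ range j := by
      intro i hi
      rw [hS, Finset.mem_filter, Finset.mem_range] at hi
      rw [Finset.mem_range]
      by_contra hij
      exact hnot (le_trans (hmono j i (by omega) hi.1) hi.2)
    have := Finset.card_le_card hsub
    rw [Finset.card_range] at this
    omega

lemma getD_le_iff {j : ℕ} (hj : j < N) (t : ℝ) :
    (L v).getD j 0 ≤ t ↔ j < (univ.filter fun i => v i ≤ t).card := by
  have hlen := length_L v
  have h1 := lt_card_iff_getD_le (L v) (sorted_L v) (by rw [hlen]; exact hj) t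
  have h2 : ((range (L v).length).filter fun i => (L v).getD i 0 ≤ t).card
      = (univ.filter fun i => v i ≤ t).card := by
    rw [card_filter_eq_countP v (fun x => x ≤ t), ← (perm_L v).countP_eq,
      countP_eq_sum (fun x => x ≤ t) (L v), Finset.card_filter]
  rw [h1, h2]

lemma measurable_kmax {Ω : Type} [MeasurableSpace Ω] (g : Fin N → Ω → ℝ)
    (hg : ∀ i, Measurable (g i)) {k : ℕ} (hk1 : 1 ≤ k) (hkN : k ≤ N) :
    Measurable fun ω => kmax (fun i => |g i ω|) k := by
  apply measurable_of_Iic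
  intro t
  have hj : N - k < N := by omega
  have hset : (fun ω => kmax (fun i => |g i ω|) k) ⁻¹' Set.Iic t =
      ⋃ S ∈ (univ : Finset (Fin N)).powersetCard (N - k + 1),
        ⋂ i ∈ S, {ω | |g i ω| ≤ t} := by
    ext ω
    simp only [Set.mem_preimage, Set.mem_Iic, Set.mem_iUnion, Set.mem_iInter, Set.mem_setOf_eq,
      Finset.mem_powersetCard, exists_prop]
    rw [show kmax (fun i => |g i ω|) k = (L fun i => |g i ω|).getD (N - k) 0 from rfl,
      getD_le_iff _ hj]
    constructor
    · intro h
      obtain ⟨S, hS, hcard⟩ := Finset.exists_subset_card_eq (by omega :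
          N - k + 1 ≤ (univ.filter fun i => |g i ω| ≤ t).card)
      exact ⟨S, ⟨fun i _ => Finset.mem_univ i, hcard⟩, fun i hi =>
        (Finset.mem_filter.mp (hS hi)).2⟩
    · rintro ⟨S, ⟨-, hcard⟩, hmem⟩
      have hsub : S ⊆ univ.filter fun i => |g i ω| ≤ t := fun i hi =>
        Finset.mem_filter.mpr ⟨Finset.mem_univ i, hmem i hi⟩
      have := Finset.card_le_card hsub
      omega
  rw [hset]
  refine MeasurableSet.biUnion (Finset.countable_toSet _) fun S _ => ?_
  refine Set.Finite.measurableSet_biInter (Finset.finite_toSet S) fun i _ => ?_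
  exact measurableSet_le (hg i).abs measurable_const

end Stmt7Aux

namespace Stmt7Gauss

open Real
open scoped ENNReal NNReal

/-! ### Gaussian integrals -/

lemma gaussianReal_eq_withDensity :
    gaussianReal 0 1 = volume.withDensity (fun x => ((gaussianPDFReal 0 1 x).toNNReal : ℝ≥0∞)) := by
  rw [gaussianReal_of_var_ne_zero 0 one_ne_zero]
  rfl

lemma integral_gaussian_eq (f : ℝ → ℝ) :
    ∫ x, f x ∂(gaussianReal 0 1) = ∫ x, gaussianPDFReal 0 1 x * f x := by
  rw [gaussianReal_eq_withDensity,
    integral_withDensity_eq_integral_smul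
      ((measurable_gaussianPDFReal 0 1).real_toNNReal) f]
  congr 1
  ext x
  rw [NNReal.smul_def, Real.coe_toNNReal _ (gaussianPDFReal_nonneg 0 1 x), smul_eq_mul]

lemma integrable_gaussian_iff (f : ℝ → ℝ) (hf : AEStronglyMeasurable f (gaussianReal 0 1)) :
    Integrable f (gaussianReal 0 1) ↔ Integrable (fun x => gaussianPDFReal 0 1 x * f x) := by
  rw [gaussianReal_eq_withDensity] at hf ⊢
  rw [integrable_withDensity_iff_integrable_smul ((measurable_gaussianPDFReal 0 1).real_toNNReal)]
  constructor <;> intro h <;> refine h.congr (Filter.Eventually.of_forall fun x => ?_) <;>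
    simp only [NNReal.smul_def, Real.coe_toNNReal _ (gaussianPDFReal_nonneg 0 1 x), smul_eq_mul]

lemma gaussianPDFReal_zero_one (x : ℝ) :
    gaussianPDFReal 0 1 x = (Real.sqrt (2 * π))⁻¹ * Real.exp (-(x ^ 2) / 2) := by
  rw [gaussianPDFReal]
  norm_num

lemma integrable_abs_rpow_mul_exp {b : ℝ} (hb : 0 < b) {s : ℝ} (hs : 0 ≤ s) :
    Integrable fun x : ℝ => |x| ^ s * Real.exp (-b * x ^ 2) := by
  have hIoi : IntegrableOn (fun x : ℝ => |x| ^ s * Real.exp (-b * x ^ 2)) (Set.Ioi 0) := by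
    refine (integrableOn_rpow_mul_exp_neg_mul_sq hb (by linarith : (-1:ℝ) < s)).congr_fun
      (fun x hx => ?_) measurableSet_Ioi
    rw [abs_of_pos hx]
  rw [← integrableOn_univ, ← Set.Iio_union_Ici (a := (0:ℝ)), integrableOn_union]
  constructor
  · rw [← (Measure.measurePreserving_neg (volume : Measure ℝ)).integrableOn_comp_preimage
        (Homeomorph.neg ℝ).measurableEmbedding]
    have heq : (fun x : ℝ => |x| ^ s * Real.exp (-b * x ^ 2)) ∘ Neg.neg =
        fun x : ℝ => |x| ^ s * Real.exp (-b * x ^ 2) := by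
      ext x; simp [Function.comp, abs_neg, neg_sq]
    rw [heq]
    have hpre : Neg.neg ⁻¹' (Set.Iio (0:ℝ)) = Set.Ioi 0 := by
      ext x; simp
    rw [hpre]
    exact hIoi
  · rw [integrableOn_Ici_iff_integrableOn_Ioi]
    exact hIoi

lemma rpow_le_aux {q : ℝ} (hq : 1 ≤ q) (a : ℝ) :
    |a| ^ q ≤ (2 * q) ^ (q / 2) * Real.exp (a ^ 2 / 4) := by
  have h2q : (0:ℝ) < 2 * q := by linarith
  have key : |a| ^ q = (a ^ 2) ^ (q / 2) := by
    rw [← sq_abs, ← Real.rpow_natCast |a| 2, ← Real.rpow_mul (abs_nonneg a)]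
    norm_num
    rw [mul_div_cancel₀ _ (two_ne_zero)]
  rw [key]
  set u := a ^ 2 with hu
  have hu0 : 0 ≤ u := sq_nonneg a
  have hsplit : u ^ (q / 2) = (2 * q) ^ (q / 2) * (u / (2 * q)) ^ (q / 2) := by
    rw [← Real.mul_rpow (le_of_lt h2q) (by positivity)]
    rw [mul_div_cancel₀ _ (ne_of_gt h2q)]
  rw [hsplit]
  apply mul_le_mul_of_nonneg_left _ (by positivity)
  rcases eq_or_lt_of_le hu0 with h0 | hupos
  · rw [← h0]
    rw [zero_div, Real.zero_rpow (by positivity)]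
    positivity
  · have hr : 0 < u / (2 * q) := by positivity
    rw [Real.rpow_def_of_pos hr]
    apply Real.exp_le_exp.mpr
    have hlog := Real.log_le_sub_one_of_pos hr
    calc Real.log (u / (2 * q)) * (q / 2) ≤ (u / (2 * q)) * (q / 2) := by
          apply mul_le_mul_of_nonneg_right _ (by positivity)
          linarith
      _ = u / 4 := by field_simp; ring

/-! ### Moment bounds -/

variable {q : ℝ}

lemma meas_absq (q : ℝ) : Measurable fun x : ℝ => |x| ^ q :=
  measurable_abs.pow_const q

lemma integrand_eq (q x : ℝ) :
    gaussianPDFReal 0 1 x * |x| ^ q =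
      (Real.sqrt (2 * π))⁻¹ * (|x| ^ q * Real.exp (-(1/2) * x ^ 2)) := by
  rw [gaussianPDFReal_zero_one]
  ring_nf

lemma integrable_density (hq : 0 ≤ q) :
    Integrable (fun x => gaussianPDFReal 0 1 x * |x| ^ q) := by
  have := (integrable_abs_rpow_mul_exp (b := 1/2) (by norm_num) hq).const_mul
    (Real.sqrt (2 * π))⁻¹
  refine this.congr (Filter.Eventually.of_forall fun x => ?_)
  simp only [integrand_eq]

lemma integrable_absq_gaussian (hq : 0 ≤ q) :
    Integrable (fun x : ℝ => |x| ^ q) (gaussianReal 0 1) := by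
  rw [integrable_gaussian_iff _ (meas_absq q).aestronglyMeasurable]
  exact integrable_density hq

lemma moment_upper (hq : 1 ≤ q) :
    ∫ x, |x| ^ q ∂(gaussianReal 0 1) ≤ (2 * Real.sqrt q) ^ q := by
  have hq0 : (0:ℝ) ≤ q := by linarith
  rw [integral_gaussian_eq]
  have step1 : ∫ x, gaussianPDFReal 0 1 x * |x| ^ q ≤
      ∫ x, (Real.sqrt (2 * π))⁻¹ * ((2 * q) ^ (q / 2) * Real.exp (-(1/4) * x ^ 2)) := by
    apply integral_mono (integrable_density hq0)
    · exact ((integrable_exp_neg_mul_sq (by norm_num : (0:ℝ) < 1/4)).const_mul _).const_mul _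
    · intro x
      simp only [integrand_eq]
      have h1 := rpow_le_aux hq x
      have hc : (0:ℝ) ≤ (Real.sqrt (2 * π))⁻¹ := by positivity
      have h2 : |x| ^ q * Real.exp (-(1/2) * x ^ 2) ≤
          (2 * q) ^ (q / 2) * Real.exp (-(1/4) * x ^ 2) := by
        have hh := mul_le_mul_of_nonneg_right h1 (Real.exp_nonneg (-(1/2) * x ^ 2))
        calc |x| ^ q * Real.exp (-(1/2) * x ^ 2)
            ≤ (2 * q) ^ (q / 2) * Real.exp (x ^ 2 / 4) * Real.exp (-(1/2) * x ^ 2) := hh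
          _ = (2 * q) ^ (q / 2) * Real.exp (-(1/4) * x ^ 2) := by
              rw [mul_assoc, ← Real.exp_add]
              ring_nf
      exact mul_le_mul_of_nonneg_left h2 hc
  have step2 : ∫ x, (Real.sqrt (2 * π))⁻¹ * ((2 * q) ^ (q / 2) * Real.exp (-(1/4) * x ^ 2))
      = (Real.sqrt (2 * π))⁻¹ * (2 * q) ^ (q / 2) * Real.sqrt (π / (1/4)) := by
    rw [MeasureTheory.integral_const_mul, MeasureTheory.integral_const_mul, integral_gaussian]
    ring
  have step3 : (Real.sqrt (2 * π))⁻¹ * (2 * q) ^ (q / 2) * Real.sqrt (π / (1/4))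
      ≤ (2 * Real.sqrt q) ^ q := by
    have hsq : Real.sqrt (π / (1/4)) = 2 * Real.sqrt π := by
      rw [show π / (1/4) = 4 * π by ring, show (4:ℝ) * π = 2^2 * π by norm_num,
        Real.sqrt_mul (by positivity), Real.sqrt_sq (by norm_num)]
    have hsqrt2pi : Real.sqrt (2 * π) = Real.sqrt 2 * Real.sqrt π := Real.sqrt_mul (by norm_num) _
    have hfac : (Real.sqrt (2 * π))⁻¹ * Real.sqrt (π / (1/4)) = 2 / Real.sqrt 2 := by
      have hpi : Real.sqrt π ≠ 0 := by positivity
      rw [hsq, hsqrt2pi]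
      calc (Real.sqrt 2 * Real.sqrt π)⁻¹ * (2 * Real.sqrt π)
          = 2 * (Real.sqrt 2)⁻¹ * ((Real.sqrt π)⁻¹ * Real.sqrt π) := by rw [mul_inv]; ring
        _ = 2 / Real.sqrt 2 := by rw [inv_mul_cancel₀ hpi]; ring
    have h2q : (2 * q) ^ (q / 2) = 2 ^ (q/2) * q ^ (q/2) := Real.mul_rpow (by norm_num) hq0
    have hrhs : (2 * Real.sqrt q) ^ q = 2 ^ q * q ^ (q/2) := by
      rw [Real.mul_rpow (by norm_num) (Real.sqrt_nonneg q), Real.sqrt_eq_rpow,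
        ← Real.rpow_mul hq0, show (1/2) * q = q/2 by ring]
    have hfrac : (2:ℝ) / Real.sqrt 2 = Real.sqrt 2 := by
      rw [div_eq_iff (by positivity : Real.sqrt 2 ≠ 0)]
      exact (Real.mul_self_sqrt (by norm_num)).symm
    have hmid : (2:ℝ)/Real.sqrt 2 * 2 ^ (q/2) ≤ 2 ^ q := by
      rw [hfrac, Real.sqrt_eq_rpow, ← Real.rpow_add (by norm_num : (0:ℝ) < 2)]
      exact Real.rpow_le_rpow_of_exponent_le one_le_two (by linarith)
    calc (Real.sqrt (2 * π))⁻¹ * (2 * q) ^ (q / 2) * Real.sqrt (π / (1/4))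
        = ((Real.sqrt (2*π))⁻¹ * Real.sqrt (π/(1/4))) * ((2:ℝ)^(q/2) * q^(q/2)) := by
          rw [h2q]; ring
      _ = ((2:ℝ)/Real.sqrt 2 * 2^(q/2)) * q^(q/2) := by rw [hfac]; ring
      _ ≤ 2^q * q^(q/2) := by
          apply mul_le_mul_of_nonneg_right hmid (by positivity)
      _ = (2 * Real.sqrt q) ^ q := hrhs.symm
  linarith

lemma sqrt_rpow_self (hq0 : 0 ≤ q) : Real.sqrt q ^ q = q ^ (q/2) := by
  rw [Real.sqrt_eq_rpow, ← Real.rpow_mul hq0, show (1/2) * q = q/2 by ring]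

lemma moment_lower (hq : 1 ≤ q) :
    (Real.exp (-2) * (Real.sqrt (2*π))⁻¹ * Real.sqrt q) ^ q ≤
      ∫ x, |x| ^ q ∂(gaussianReal 0 1) := by
  have hq0 : (0:ℝ) ≤ q := by linarith
  have hsq1 : (1:ℝ) ≤ Real.sqrt q := by
    rw [show (1:ℝ) = Real.sqrt 1 by simp]
    exact Real.sqrt_le_sqrt hq
  have hsqnn : (0:ℝ) ≤ Real.sqrt q := Real.sqrt_nonneg q
  set K : ℝ := (Real.sqrt (2*π))⁻¹ * (Real.exp (-(2:ℝ)*q) * q^(q/2)) with hK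
  have hptwise : ∀ x ∈ Set.Icc (Real.sqrt q) (Real.sqrt q + 1),
      K ≤ gaussianPDFReal 0 1 x * |x| ^ q := by
    intro x hx
    obtain ⟨hx1, hx2⟩ := hx
    have hx0 : 0 ≤ x := le_trans hsqnn hx1
    have habs : |x| = x := abs_of_nonneg hx0
    have hpow : q ^ (q/2) ≤ |x| ^ q := by
      rw [habs, ← sqrt_rpow_self hq0]
      exact Real.rpow_le_rpow hsqnn hx1 hq0
    have hxsq : x ^ 2 ≤ 4 * q := by
      have h2 : x ≤ 2 * Real.sqrt q := by linarith
      calc x ^ 2 ≤ (2 * Real.sqrt q) ^ 2 := by nlinarith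
        _ = 4 * q := by rw [mul_pow, Real.sq_sqrt hq0]; norm_num
    have hexp : Real.exp (-(2:ℝ)*q) ≤ Real.exp (-(x^2)/2) := by
      apply Real.exp_le_exp.mpr
      linarith
    rw [gaussianPDFReal_zero_one]
    calc K ≤ (Real.sqrt (2*π))⁻¹ * (Real.exp (-(x^2)/2) * |x| ^ q) := by
          rw [hK]
          apply mul_le_mul_of_nonneg_left _ (by positivity)
          apply mul_le_mul hexp hpow (by positivity) (by positivity)
      _ = (Real.sqrt (2*π))⁻¹ * Real.exp (-(x^2)/2) * |x| ^ q := by ring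
  have hset : MeasurableSet (Set.Icc (Real.sqrt q) (Real.sqrt q + 1)) := measurableSet_Icc
  have hvol : (volume (Set.Icc (Real.sqrt q) (Real.sqrt q + 1))).toReal = 1 := by
    rw [Real.volume_Icc]
    norm_num
  have h1 : K * 1 ≤ ∫ x in Set.Icc (Real.sqrt q) (Real.sqrt q + 1),
      gaussianPDFReal 0 1 x * |x| ^ q := by
    have h0 := setIntegral_ge_of_const_le hset
      (by rw [Real.volume_Icc]; exact ENNReal.ofReal_ne_top) hptwise
      (integrable_density hq0).integrableOn
    rw [measureReal_def, hvol, smul_eq_mul] at h0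
    linarith
  have h2 : ∫ x in Set.Icc (Real.sqrt q) (Real.sqrt q + 1), gaussianPDFReal 0 1 x * |x| ^ q ≤
      ∫ x, gaussianPDFReal 0 1 x * |x| ^ q := by
    apply setIntegral_le_integral (integrable_density hq0)
    filter_upwards with x
    have := gaussianPDFReal_nonneg 0 1 x
    positivity
  have h3 : (Real.exp (-2) * (Real.sqrt (2*π))⁻¹ * Real.sqrt q) ^ q ≤ K := by
    have hx1 : (Real.sqrt (2*π))⁻¹ ≤ 1 := by
      apply inv_le_one_of_one_le₀
      rw [show (1:ℝ) = Real.sqrt 1 by simp]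
      apply Real.sqrt_le_sqrt
      nlinarith [Real.pi_gt_three]
    have hx0 : (0:ℝ) < (Real.sqrt (2*π))⁻¹ := by positivity
    calc (Real.exp (-2) * (Real.sqrt (2*π))⁻¹ * Real.sqrt q) ^ q
        = Real.exp (-2) ^ q * (Real.sqrt (2*π))⁻¹ ^ q * Real.sqrt q ^ q := by
          rw [Real.mul_rpow (by positivity) hsqnn, Real.mul_rpow (by positivity) (le_of_lt hx0)]
      _ ≤ Real.exp (-2) ^ q * (Real.sqrt (2*π))⁻¹ * Real.sqrt q ^ q := by
          have hh := Real.rpow_le_rpow_of_exponent_ge hx0 hx1 hq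
          rw [Real.rpow_one] at hh
          apply mul_le_mul_of_nonneg_right (mul_le_mul_of_nonneg_left hh (by positivity))
            (by positivity)
      _ = K := by
          rw [hK, sqrt_rpow_self hq0, ← Real.exp_mul]
          ring_nf
  rw [integral_gaussian_eq]
  linarith

end Stmt7Gauss

open Real Stmt7Aux Stmt7Gauss in
/-- for i.i.d. standard Gaussians g₁,…,g_N, 1 ≤ ℓ ≤ N and
log(N/ℓ) ≤ q ≤ log N, the quantity `((1/ℓ) E ∑_{k=1}^ℓ (k-max |g_i|)^q)^{1/q}`
is bounded above and below by absolute constant multiples of √q. -/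
theorem stmt7 :
    ∃ c C : ℝ, 0 < c ∧ 0 < C ∧
      ∀ (N ℓ : ℕ) (q : ℝ), 1 ≤ ℓ → ℓ ≤ N → 1 ≤ q →
        Real.log ((N : ℝ) / ℓ) ≤ q → q ≤ Real.log N →
        ∀ (Ω : Type) (_ : MeasurableSpace Ω) (P : Measure Ω), IsProbabilityMeasure P →
          ∀ g : Fin N → Ω → ℝ, (∀ i, Measurable (g i)) →
            iIndepFun g P →
            (∀ i, Measure.map (g i) P = gaussianReal 0 1) →
            c * Real.sqrt q ≤
                ((ℓ : ℝ)⁻¹ *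
                    ∫ ω, ∑ k ∈ Finset.Icc 1 ℓ, kmax (fun i => |g i ω|) k ^ q ∂P) ^ (1/q) ∧
              ((ℓ : ℝ)⁻¹ *
                  ∫ ω, ∑ k ∈ Finset.Icc 1 ℓ, kmax (fun i => |g i ω|) k ^ q ∂P) ^ (1/q) ≤
                C * Real.sqrt q := by
  refine ⟨Real.exp (-2) * (Real.sqrt (2 * π))⁻¹, 2 * Real.exp 1, by positivity, by positivity,
    ?_⟩
  intro N ℓ q hℓ1 hℓN hq hlog _hlogN Ω _ P _hP g hg _hindep hmap
  set c : ℝ := Real.exp (-2) * (Real.sqrt (2 * π))⁻¹ with hc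
  have hc0 : 0 < c := by rw [hc]; positivity
  have hq0 : (0:ℝ) ≤ q := by linarith
  have hqne : q ≠ 0 := by linarith
  have hN1 : 1 ≤ N := le_trans hℓ1 hℓN
  have hNpos : (0:ℝ) < N := by exact_mod_cast Nat.lt_of_lt_of_le Nat.zero_lt_one hN1
  have hlpos : (0:ℝ) < ℓ := by exact_mod_cast Nat.lt_of_lt_of_le Nat.zero_lt_one hℓ1
  set Mq : ℝ := ∫ x, |x| ^ q ∂(gaussianReal 0 1) with hMq
  -- per-coordinate facts
  have hint_i : ∀ i, Integrable (fun ω => |g i ω| ^ q) P := by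
    intro i
    have h1 : Integrable (fun x : ℝ => |x| ^ q) (Measure.map (g i) P) := by
      rw [hmap i]; exact integrable_absq_gaussian hq0
    exact (integrable_map_measure (meas_absq q).aestronglyMeasurable
      (hg i).aemeasurable).mp h1
  have hval_i : ∀ i, ∫ ω, |g i ω| ^ q ∂P = Mq := by
    intro i
    rw [hMq, ← hmap i,
      integral_map (hg i).aemeasurable (meas_absq q).aestronglyMeasurable]
  -- global functions
  set B : Ω → ℝ := fun ω => ∑ i, |g i ω| ^ q with hB
  set A : Ω → ℝ := fun ω => ∑ k ∈ Finset.Icc 1 ℓ, kmax (fun i => |g i ω|) k ^ q with hA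
  have hBint : Integrable B P := integrable_finset_sum _ fun i _ => hint_i i
  have hBval : ∫ ω, B ω ∂P = (N : ℝ) * Mq := by
    rw [hB, integral_finset_sum _ fun i _ => hint_i i]
    simp only [hval_i]
    rw [Finset.sum_const, Finset.card_univ, Fintype.card_fin, nsmul_eq_mul]
  have hAmeas : Measurable A := by
    apply Finset.measurable_sum
    intro k hk
    rw [Finset.mem_Icc] at hk
    exact (measurable_kmax g hg hk.1 (le_trans hk.2 hℓN)).pow_const q
  have hA0 : ∀ ω, 0 ≤ A ω := by
    intro ω
    apply Finset.sum_nonneg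
    intro k _
    exact Real.rpow_nonneg (kmax_nonneg _ (fun i => abs_nonneg _) k) q
  -- pointwise comparisons
  have hkey : ∀ ω : Ω, A ω ≤ B ω ∧ (ℓ:ℝ) * B ω ≤ (N:ℝ) * A ω := by
    intro ω
    set v : Fin N → ℝ := fun i => |g i ω| with hv
    have hF0 : ∀ j, 0 ≤ (L v).getD j 0 ^ q := fun j =>
      Real.rpow_nonneg (getD_nonneg v (fun i => abs_nonneg _) j) q
    have hFmono : ∀ i j, i ≤ j → j < N → (L v).getD i 0 ^ q ≤ (L v).getD j 0 ^ q := by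
      intro i j hij hj
      exact Real.rpow_le_rpow (getD_nonneg v (fun i => abs_nonneg _) i)
        (getD_mono v hij hj) hq0
    have hAeq : A ω = ∑ j ∈ Finset.Ico (N - ℓ) N, (L v).getD j 0 ^ q := by
      have h0 : A ω = ∑ k ∈ Finset.Icc 1 ℓ, (fun j => (L v).getD j 0 ^ q) (N - k) := rfl
      exact h0.trans (sum_sub_reindex (fun j => (L v).getD j 0 ^ q) hℓN)
    have hBeq : B ω = ∑ j ∈ Finset.range N, (L v).getD j 0 ^ q := by
      have h0 : B ω = ∑ i, (fun x : ℝ => x ^ q) (v i) := rfl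
      rw [h0, ← sum_getD_eq v (L v) (perm_L v) (length_L v) (fun x => x ^ q)]
    refine ⟨?_, ?_⟩
    · rw [hAeq, hBeq]
      exact top_le_total _ hF0
    · rw [hAeq, hBeq]
      exact total_le_top _ hF0 hFmono hℓ1 hℓN
  have hAint : Integrable A P := by
    apply hBint.mono' hAmeas.aestronglyMeasurable
    filter_upwards with ω
    rw [Real.norm_eq_abs, abs_of_nonneg (hA0 ω)]
    exact (hkey ω).1
  set I : ℝ := ∫ ω, A ω ∂P with hI
  have hIupper : I ≤ (N : ℝ) * Mq := by
    rw [hI, ← hBval]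
    exact integral_mono hAint hBint fun ω => (hkey ω).1
  have hIlower : (ℓ : ℝ) * ((N:ℝ) * Mq) ≤ (N : ℝ) * I := by
    have h1 : ∫ ω, (ℓ:ℝ) * B ω ∂P ≤ ∫ ω, (N:ℝ) * A ω ∂P :=
      integral_mono (hBint.const_mul _) (hAint.const_mul _) fun ω => (hkey ω).2
    rwa [MeasureTheory.integral_const_mul, MeasureTheory.integral_const_mul, hBval] at h1
  have hMq0 : 0 ≤ Mq := le_trans (by positivity) (moment_lower hq)
  have hXlow : Mq ≤ (ℓ:ℝ)⁻¹ * I := by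
    have h2 : (ℓ:ℝ) * Mq ≤ I := by
      have := hIlower
      nlinarith [hNpos, hlpos]
    calc Mq = (ℓ:ℝ)⁻¹ * ((ℓ:ℝ) * Mq) := by field_simp
      _ ≤ (ℓ:ℝ)⁻¹ * I := by
          apply mul_le_mul_of_nonneg_left h2 (by positivity)
  have hXhigh : (ℓ:ℝ)⁻¹ * I ≤ ((N:ℝ)/ℓ) * Mq := by
    calc (ℓ:ℝ)⁻¹ * I ≤ (ℓ:ℝ)⁻¹ * ((N:ℝ) * Mq) := by
          apply mul_le_mul_of_nonneg_left hIupper (by positivity)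
      _ = ((N:ℝ)/ℓ) * Mq := by ring
  have hX0 : 0 ≤ (ℓ:ℝ)⁻¹ * I := le_trans hMq0 hXlow
  have hrpow_cancel : ∀ a : ℝ, 0 ≤ a → (a ^ q) ^ (1/q) = a := by
    intro a ha
    rw [← Real.rpow_mul ha, mul_one_div_cancel hqne, Real.rpow_one]
  constructor
  · -- lower bound
    have h1 : (c * Real.sqrt q) ^ q ≤ (ℓ:ℝ)⁻¹ * I := le_trans (moment_lower hq) hXlow
    calc c * Real.sqrt q = ((c * Real.sqrt q) ^ q) ^ (1/q) :=
          (hrpow_cancel _ (by positivity)).symm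
      _ ≤ ((ℓ:ℝ)⁻¹ * I) ^ (1/q) :=
          Real.rpow_le_rpow (by positivity) h1 (by positivity)
  · -- upper bound
    have hNl : (N:ℝ)/ℓ ≤ Real.exp q := by
      rw [← Real.log_le_iff_le_exp (by positivity)]
      exact hlog
    have h2 : (ℓ:ℝ)⁻¹ * I ≤ (2 * Real.exp 1 * Real.sqrt q) ^ q := by
      calc (ℓ:ℝ)⁻¹ * I ≤ ((N:ℝ)/ℓ) * Mq := hXhigh
        _ ≤ Real.exp q * (2 * Real.sqrt q) ^ q := by
            apply mul_le_mul hNl (moment_upper hq) hMq0 (Real.exp_nonneg q)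
        _ = (2 * Real.exp 1 * Real.sqrt q) ^ q := by
            rw [Real.mul_rpow (by positivity : (0:ℝ) ≤ 2 * Real.exp 1) (Real.sqrt_nonneg q),
              Real.mul_rpow (by norm_num : (0:ℝ) ≤ 2) (Real.exp_nonneg 1),
              Real.exp_one_rpow, Real.mul_rpow (by norm_num : (0:ℝ) ≤ 2) (Real.sqrt_nonneg q)]
            ring
    calc ((ℓ:ℝ)⁻¹ * I) ^ (1/q) ≤ ((2 * Real.exp 1 * Real.sqrt q) ^ q) ^ (1/q) :=
          Real.rpow_le_rpow hX0 h2 (by positivity)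
      _ = 2 * Real.exp 1 * Real.sqrt q := hrpow_cancel _ (by positivity)
end

section
/- Let g_1,...,g_n be independent random variables with density f(t) = e^{-|t|^p}/(2Γ(1+1/p)) on R, 1 ≤ p < ∞, G = (g_1,...,g_n), and Y = G/||G||_p. Then Y is independent of ||G||_p and Y is distributed according to the cone probability measure on the ℓ_p^n-sphere. -/
open MeasureTheory ProbabilityTheory Finset Pointwise
open scoped ENNReal NNReal

section SZAux

open scoped ENNReal NNReal
open Set Metric

namespace SZ

theorem lintegral_fin_prod {n : ℕ} (f : Fin n → ℝ → ℝ≥0∞) (hf : ∀ i, Measurable (f i)) :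
    ∫⁻ x : Fin n → ℝ, ∏ i, f i (x i) ∂(Measure.pi fun _ => volume) = ∏ i, ∫⁻ t, f i t := by
  induction n with
  | zero => simp
  | succ m ih =>
    rw [← ((measurePreserving_piFinSuccAbove (fun _ : Fin (m+1) => (volume : Measure ℝ))
        0).symm).lintegral_comp_emb (MeasurableEquiv.measurableEmbedding _)]
    simp_rw [MeasurableEquiv.piFinSuccAbove_symm_apply, Fin.insertNthEquiv,
      Fin.prod_univ_succ, Fin.insertNth_zero]
    simp only [Fin.zero_succAbove, cast_eq, Equiv.coe_fn_mk, Fin.cons_zero, Fin.cons_succ]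
    have hg : Measurable fun y : Fin m → ℝ => ∏ i, f i.succ (y i) :=
      Finset.measurable_prod _ fun i _ => (hf i.succ).comp (measurable_pi_apply i)
    exact (lintegral_prod_mul (f := fun t => f 0 t)
      (g := fun y : Fin m → ℝ => ∏ i, f i.succ (y i)) (hf 0).aemeasurable
      hg.aemeasurable).trans (by rw [ih (fun i => f i.succ) fun i => hf i.succ])

theorem pi_withDensity {n : ℕ} (f : ℝ → ℝ≥0∞) (hf : Measurable f)
    [SigmaFinite (volume.withDensity f)] :
    Measure.pi (fun _ : Fin n => volume.withDensity f)
      = (Measure.pi fun _ : Fin n => (volume : Measure ℝ)).withDensity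
          (fun x => ∏ i, f (x i)) := by
  refine Measure.pi_eq (μ := fun _ : Fin n => volume.withDensity f) fun s hs => ?_
  rw [withDensity_apply _ (MeasurableSet.univ_pi hs),
    ← lintegral_indicator (MeasurableSet.univ_pi hs)]
  have hind : ∀ x : Fin n → ℝ,
      (Set.univ.pi s).indicator (fun x => ∏ i, f (x i)) x = ∏ i, (s i).indicator f (x i) := by
    intro x
    by_cases hx : x ∈ Set.univ.pi s
    · rw [Set.indicator_of_mem hx]
      exact Finset.prod_congr rfl fun i _ =>
        (Set.indicator_of_mem (hx i (Set.mem_univ i)) f).symm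
    · rw [Set.indicator_of_notMem hx]
      obtain ⟨i, hi⟩ := not_forall.1 (by simpa [Set.mem_univ_pi] using hx)
      exact (Finset.prod_eq_zero (Finset.mem_univ i) (by rw [Set.indicator_of_notMem hi])).symm
  simp_rw [hind]
  rw [SZ.lintegral_fin_prod _ fun i => hf.indicator (hs i)]
  exact Finset.prod_congr rfl fun i _ => by
    rw [lintegral_indicator (hs i), ← withDensity_apply _ (hs i)]

theorem map_pi_eq {n : ℕ} {Ω : Type} [MeasurableSpace Ω] (P : Measure Ω)
    [IsProbabilityMeasure P] (g : Fin n → Ω → ℝ) (hmeas : ∀ j, Measurable (g j))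
    (hindep : iIndepFun g P) :
    Measure.map (fun ω j => g j ω) P = Measure.pi (fun j => Measure.map (g j) P) := by
  haveI : ∀ j, IsProbabilityMeasure (Measure.map (g j) P) :=
    fun j => Measure.isProbabilityMeasure_map (hmeas j).aemeasurable
  refine (Measure.pi_eq (μ := fun j => Measure.map (g j) P) fun s hs => ?_).symm
  rw [Measure.map_apply (measurable_pi_iff.2 hmeas) (MeasurableSet.univ_pi hs)]
  have hpre : (fun ω (j : Fin n) => g j ω) ⁻¹' (Set.univ.pi s)
      = ⋂ j ∈ Finset.univ, g j ⁻¹' s j := by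
    ext ω; simp
  rw [hpre, hindep.measure_inter_preimage_eq_mul Finset.univ (fun i _ => hs i)]
  exact Finset.prod_congr rfl fun j _ => (Measure.map_apply (hmeas j) (hs j)).symm

instance (q : ℝ≥0∞) (n : ℕ) : MeasurableSpace (PiLp q (fun _ : Fin n => ℝ)) :=
  inferInstance

instance (q : ℝ≥0∞) (n : ℕ) : BorelSpace (PiLp q (fun _ : Fin n => ℝ)) :=
  inferInstance

noncomputable def volE (q : ℝ≥0∞) (n : ℕ) : Measure (PiLp q (fun _ : Fin n => ℝ)) :=
  Measure.map (WithLp.toLp q) (volume : Measure (Fin n → ℝ))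

instance (q : ℝ≥0∞) [Fact (1 ≤ q)] (n : ℕ) :
    FiniteDimensional ℝ (PiLp q (fun _ : Fin n => ℝ)) :=
  (PiLp.continuousLinearEquiv q ℝ (fun _ : Fin n => ℝ)).symm.toLinearEquiv.finiteDimensional

instance (q : ℝ≥0∞) [Fact (1 ≤ q)] (n : ℕ) : (volE q n).IsAddHaarMeasure := by
  have h : volE q n = Measure.map
      (⇑(PiLp.continuousLinearEquiv q ℝ (fun _ : Fin n => ℝ)).symm)
      (volume : Measure (Fin n → ℝ)) := by
    rfl
  rw [h]
  infer_instance

theorem dim_eq (q : ℝ≥0∞) [Fact (1 ≤ q)] (n : ℕ) :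
    Module.finrank ℝ (PiLp q (fun _ : Fin n => ℝ)) = n := by
  rw [(PiLp.continuousLinearEquiv q ℝ (fun _ : Fin n => ℝ)).toLinearEquiv.finrank_eq]
  simp [Module.finrank_fintype_fun_eq_card]

theorem core {E : Type*} [NormedAddCommGroup E] [NormedSpace ℝ E] [MeasurableSpace E]
    [BorelSpace E] [FiniteDimensional ℝ E] [Nontrivial E]
    (μ : Measure E) [μ.IsAddHaarMeasure] {ρ : ℝ → ℝ≥0∞} (hρ : Measurable ρ)
    {B : Set E} (hB : MeasurableSet B) {A : Set ℝ} (hA : MeasurableSet A) :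
    μ.withDensity (fun x => ρ ‖x‖) {x : E | ‖x‖⁻¹ • x ∈ B ∧ ‖x‖ ∈ A ∧ x ≠ 0} =
      μ.toSphere (((↑) : sphere (0:E) 1 → E) ⁻¹' B) *
        ∫⁻ r in ((↑) : Ioi (0:ℝ) → ℝ) ⁻¹' A, ρ ↑r
          ∂(Measure.volumeIoiPow (Module.finrank ℝ E - 1)) := by
  set s : Set (sphere (0:E) 1) := ((↑) : sphere (0:E) 1 → E) ⁻¹' B with hs_def
  set a : Set (Ioi (0:ℝ)) := ((↑) : Ioi (0:ℝ) → ℝ) ⁻¹' A with ha_def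
  have hScompl : MeasurableSet ({0}ᶜ : Set E) := (measurableSet_singleton 0).compl
  have hsm : MeasurableSet s := measurable_subtype_coe hB
  have ham : MeasurableSet a := measurable_subtype_coe hA
  have hset : {x : E | ‖x‖⁻¹ • x ∈ B ∧ ‖x‖ ∈ A ∧ x ≠ 0}
      = (↑) '' ((homeomorphUnitSphereProd E) ⁻¹' (s ×ˢ a)) := by
    ext x
    simp only [mem_setOf_eq, mem_image, Set.mem_preimage, Set.mem_prod, hs_def, ha_def,
      homeomorphUnitSphereProd_apply_fst_coe, homeomorphUnitSphereProd_apply_snd_coe]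
    constructor
    · rintro ⟨h1, h2, h3⟩
      exact ⟨⟨x, h3⟩, ⟨h1, h2⟩, rfl⟩
    · rintro ⟨z, ⟨hz1, hz2⟩, rfl⟩
      exact ⟨hz1, hz2, z.2⟩
  have hmeasT : MeasurableSet ((homeomorphUnitSphereProd E) ⁻¹' (s ×ˢ a)) :=
    (homeomorphUnitSphereProd E).measurable (hsm.prod ham)
  have hmeasImg : MeasurableSet
      (((↑) : ({0}ᶜ : Set E) → E) '' ((homeomorphUnitSphereProd E) ⁻¹' (s ×ˢ a))) :=
    (MeasurableEmbedding.subtype_coe hScompl).measurableSet_image.2 hmeasT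
  rw [hset, withDensity_apply _ hmeasImg,
    ← setLIntegral_subtype hScompl _ (fun x => ρ ‖x‖)]
  have hkey := (μ.measurePreserving_homeomorphUnitSphereProd).setLIntegral_comp_preimage_emb
    (Homeomorph.measurableEmbedding _)
    (fun y : sphere (0:E) 1 × Ioi (0:ℝ) => ρ ↑y.2) (s ×ˢ a)
  refine Eq.trans ?_ (hkey.trans ?_)
  · simp only [homeomorphUnitSphereProd_apply_snd_coe]
  rw [← Measure.prod_restrict,
    lintegral_prod (fun y : sphere (0:E) 1 × Ioi (0:ℝ) => ρ ↑y.2)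
      ((hρ.comp (measurable_subtype_coe.comp measurable_snd)).aemeasurable)]
  have hrfl : ∀ x : sphere (0:E) 1,
      (∫⁻ y in a, ρ ↑(x, y).2 ∂(Measure.volumeIoiPow (Module.finrank ℝ E - 1)))
        = ∫⁻ r in a, ρ ↑r ∂(Measure.volumeIoiPow (Module.finrank ℝ E - 1)) := fun _ => rfl
  simp only [hrfl]
  rw [setLIntegral_const, mul_comm]

end SZ

end SZAux

/-- Schechtman–Zinn: if g₁,…,g_n are i.i.d. with density
`t ↦ e^{-|t|^p}/(2Γ(1+1/p))`, G = (g₁,…,g_n) and Y = G/‖G‖_p, then Y is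
independent of ‖G‖_p and Y is distributed according to the cone probability
measure on the ℓ_pⁿ-sphere, i.e. for every Borel set B the probability that
Y ∈ B equals `vol{r·x : x ∈ B ∩ S_pⁿ⁻¹, 0 ≤ r ≤ 1}/vol(B_pⁿ)`. -/
theorem stmt10 {n : ℕ} (hn : 1 ≤ n) (p : ℝ) (hp : 1 ≤ p)
    {Ω : Type} [MeasurableSpace Ω] (P : Measure Ω) [IsProbabilityMeasure P]
    (g : Fin n → Ω → ℝ) (hmeas : ∀ j, Measurable (g j))
    (hindep : iIndepFun g P)
    (hdist : ∀ j, Measure.map (g j) P =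
      volume.withDensity (fun t =>
        ENNReal.ofReal (Real.exp (-|t| ^ p) / (2 * Real.Gamma (1 + 1/p))))) :
    IndepFun (fun ω => ((∑ j, |g j ω| ^ p) ^ (1/p))⁻¹ • fun j => g j ω)
        (fun ω => (∑ j, |g j ω| ^ p) ^ (1/p)) P ∧
      ∀ B : Set (Fin n → ℝ), MeasurableSet B →
        Measure.map (fun ω => ((∑ j, |g j ω| ^ p) ^ (1/p))⁻¹ • fun j => g j ω) P B =
          volume {y : Fin n → ℝ | ∃ x ∈ B, (∑ j, |x j| ^ p) ^ (1/p) = 1 ∧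
              ∃ r : ℝ, 0 ≤ r ∧ r ≤ 1 ∧ y = r • x} /
            volume {x : Fin n → ℝ | (∑ j, |x j| ^ p) ^ (1/p) ≤ 1} := by
  classical
  have hp0 : 0 < p := lt_of_lt_of_le one_pos hp
  have hΓ : 0 < Real.Gamma (1 + 1/p) := Real.Gamma_pos_of_pos (by positivity)
  have hc0 : (0:ℝ) < 2 * Real.Gamma (1 + 1/p) := by linarith
  haveI : Fact (1 ≤ ENNReal.ofReal p) := ⟨by simpa using ENNReal.ofReal_le_ofReal hp⟩
  haveI : Nonempty (Fin n) := ⟨⟨0, hn⟩⟩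
  haveI : Nontrivial (PiLp (ENNReal.ofReal p) (fun _ : Fin n => ℝ)) :=
    (PiLp.continuousLinearEquiv (ENNReal.ofReal p) ℝ (fun _ : Fin n => ℝ)).toEquiv.nontrivial
  have hqt : (ENNReal.ofReal p).toReal = p := ENNReal.toReal_ofReal hp0.le
  have eq_norm : ∀ x : Fin n → ℝ,
      @norm (PiLp (ENNReal.ofReal p) (fun _ : Fin n => ℝ)) _ (WithLp.toLp (ENNReal.ofReal p) x)
        = (∑ j, |x j| ^ p) ^ (1/p) := by
    intro x
    have h := PiLp.norm_eq_sum (p := ENNReal.ofReal p) (β := fun _ : Fin n => ℝ)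
      (by rw [hqt]; exact hp0) (WithLp.toLp (ENNReal.ofReal p) x)
    simpa only [hqt, Real.norm_eq_abs, PiLp.toLp_apply] using h
  -- density functions
  have hf₀m : Measurable (fun t : ℝ =>
      ENNReal.ofReal (Real.exp (-|t| ^ p) / (2 * Real.Gamma (1 + 1/p)))) := by
    apply Measurable.ennreal_ofReal
    exact ((Real.continuous_exp.comp ((continuous_abs.rpow_const
      fun _ => Or.inr hp0.le).neg)).div_const _).measurable
  set ρ : ℝ → ℝ≥0∞ := fun r =>
    ENNReal.ofReal (Real.exp (-r ^ p) / (2 * Real.Gamma (1 + 1/p)) ^ n) with hρ_def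
  have hρm : Measurable ρ := by
    apply Measurable.ennreal_ofReal
    exact ((Real.continuous_exp.comp ((continuous_id.rpow_const
      fun _ => Or.inr hp0.le).neg)).div_const _).measurable
  -- measurability of the basic maps
  have hG : Measurable (fun ω (j : Fin n) => g j ω) := measurable_pi_iff.2 hmeas
  have hGE : Measurable (show Ω → PiLp (ENNReal.ofReal p) (fun _ : Fin n => ℝ)
      from fun ω => WithLp.toLp (ENNReal.ofReal p) (fun j => g j ω)) :=
    (WithLp.measurable_toLp _ _).comp hG
  have hsum : Measurable fun ω => ∑ j, |g j ω| ^ p :=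
    Finset.measurable_sum _ fun j _ =>
      ((continuous_abs.rpow_const fun _ => Or.inr hp0.le).measurable).comp (hmeas j)
  have hN : Measurable fun ω => (∑ j, |g j ω| ^ p) ^ (1/p) :=
    ((continuous_id.rpow_const fun _ => Or.inr (by positivity)).measurable).comp hsum
  have hY : Measurable fun ω => ((∑ j, |g j ω| ^ p) ^ (1/p))⁻¹ • fun j => g j ω :=
    measurable_pi_iff.2 fun j => (hN.inv.mul (hmeas j))
  -- the law of G
  haveI hprob0 : IsProbabilityMeasure (volume.withDensity (fun t : ℝ =>
      ENNReal.ofReal (Real.exp (-|t| ^ p) / (2 * Real.Gamma (1 + 1/p))))) := by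
    rw [← hdist ⟨0, hn⟩]
    exact Measure.isProbabilityMeasure_map (hmeas _).aemeasurable
  have hν : (Measure.map (show Ω → PiLp (ENNReal.ofReal p) (fun _ : Fin n => ℝ)
        from fun ω => WithLp.toLp (ENNReal.ofReal p) (fun j => g j ω)) P)
      = (SZ.volE (ENNReal.ofReal p) n).withDensity
          (fun x : PiLp (ENNReal.ofReal p) (fun _ : Fin n => ℝ) => ρ ‖x‖) := by
    have h1 := SZ.map_pi_eq P g hmeas hindep
    have h2 : (fun j : Fin n => Measure.map (g j) P)
        = fun _ => volume.withDensity (fun t : ℝ =>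
            ENNReal.ofReal (Real.exp (-|t| ^ p) / (2 * Real.Gamma (1 + 1/p)))) :=
      funext fun j => hdist j
    have h3 := SZ.pi_withDensity (n := n) _ hf₀m
    have h4 : (fun x : Fin n → ℝ => ∏ j,
        ENNReal.ofReal (Real.exp (-|x j| ^ p) / (2 * Real.Gamma (1 + 1/p))))
        = fun x : Fin n → ℝ => ρ ‖WithLp.toLp (ENNReal.ofReal p) x‖ := by
      funext x
      have hsum_nn : (0:ℝ) ≤ ∑ j, |x j| ^ p :=
        Finset.sum_nonneg fun j _ => Real.rpow_nonneg (abs_nonneg _) _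
      have hxnorm : @norm (PiLp (ENNReal.ofReal p) (fun _ : Fin n => ℝ)) _ (WithLp.toLp (ENNReal.ofReal p) x) ^ p
          = ∑ j, |x j| ^ p := by
        rw [eq_norm x, ← Real.rpow_mul hsum_nn, one_div_mul_cancel hp0.ne', Real.rpow_one]
      simp only [hρ_def]
      rw [hxnorm]
      rw [← ENNReal.ofReal_prod_of_nonneg fun j _ => div_nonneg (Real.exp_pos _).le hc0.le]
      congr 1
      rw [Finset.prod_div_distrib, Finset.prod_const, Finset.card_univ, Fintype.card_fin,
        ← Real.exp_sum, Finset.sum_neg_distrib]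
    have hcomp : (fun ω => WithLp.toLp (ENNReal.ofReal p) (fun j => g j ω))
        = WithLp.toLp (ENNReal.ofReal p) ∘ (fun ω (j : Fin n) => g j ω) := rfl
    rw [hcomp, ← Measure.map_map (WithLp.measurable_toLp _ _) hG, h1, h2, h3, h4]
    ext s hs
    rw [Measure.map_apply (WithLp.measurable_toLp _ _) hs,
      withDensity_apply _ ((WithLp.measurable_toLp _ _) hs), withDensity_apply _ hs, SZ.volE]
    exact (setLIntegral_map hs (hρm.comp measurable_norm) (WithLp.measurable_toLp _ _)).symm
  -- abbreviations for the two factors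
  set msph : Set (Fin n → ℝ) → ℝ≥0∞ := fun B =>
    (SZ.volE (ENNReal.ofReal p) n).toSphere
      (((↑) : Metric.sphere (0 : PiLp (ENNReal.ofReal p) (fun _ : Fin n => ℝ)) 1 →
        PiLp (ENNReal.ofReal p) (fun _ : Fin n => ℝ)) ⁻¹' (WithLp.ofLp ⁻¹' B : Set (PiLp (ENNReal.ofReal p) (fun _ : Fin n => ℝ)))) with hmsph
  set rrad : Set ℝ → ℝ≥0∞ := fun A =>
    ∫⁻ r in ((↑) : Set.Ioi (0:ℝ) → ℝ) ⁻¹' A, ρ ↑r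
      ∂(Measure.volumeIoiPow
          (Module.finrank ℝ (PiLp (ENNReal.ofReal p) (fun _ : Fin n => ℝ)) - 1)) with hrrad
  -- the master identity
  have master : ∀ (B : Set (Fin n → ℝ)) (A : Set ℝ), MeasurableSet B → MeasurableSet A →
      P ((fun ω => ((∑ j, |g j ω| ^ p) ^ (1/p))⁻¹ • fun j => g j ω) ⁻¹' B
          ∩ (fun ω => (∑ j, |g j ω| ^ p) ^ (1/p)) ⁻¹' A)
        = msph B * rrad A := by
    intro B A hB hA
    have hB' : MeasurableSet (WithLp.ofLp ⁻¹' B : Set (PiLp (ENNReal.ofReal p) (fun _ : Fin n => ℝ))) :=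
        (WithLp.measurable_ofLp _ _) hB
    have hY' : Measurable fun x : PiLp (ENNReal.ofReal p) (fun _ : Fin n => ℝ) =>
        ‖x‖⁻¹ • x := measurable_norm.inv.smul measurable_id
    have hSm : MeasurableSet {x : PiLp (ENNReal.ofReal p) (fun _ : Fin n => ℝ) |
        ‖x‖⁻¹ • x ∈ (WithLp.ofLp ⁻¹' B : Set (PiLp (ENNReal.ofReal p) (fun _ : Fin n => ℝ))) ∧ ‖x‖ ∈ A} := by
      rw [Set.setOf_and]
      exact (hY' hB').inter (measurable_norm hA)
    have hpre : ((fun ω => ((∑ j, |g j ω| ^ p) ^ (1/p))⁻¹ • fun j => g j ω) ⁻¹' B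
          ∩ (fun ω => (∑ j, |g j ω| ^ p) ^ (1/p)) ⁻¹' A)
        = (show Ω → PiLp (ENNReal.ofReal p) (fun _ : Fin n => ℝ)
            from fun ω => WithLp.toLp (ENNReal.ofReal p) (fun j => g j ω)) ⁻¹'
            {x : PiLp (ENNReal.ofReal p) (fun _ : Fin n => ℝ) |
              ‖x‖⁻¹ • x ∈ (WithLp.ofLp ⁻¹' B : Set (PiLp (ENNReal.ofReal p) (fun _ : Fin n => ℝ)))
                ∧ ‖x‖ ∈ A} := by
      ext ω
      simp only [Set.mem_inter_iff, Set.mem_preimage, Set.mem_setOf_eq, WithLp.ofLp_smul,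
        WithLp.ofLp_toLp]
      rw [eq_norm (fun j => g j ω)]
    rw [hpre, ← Measure.map_apply hGE hSm, hν]
    have hzero : (SZ.volE (ENNReal.ofReal p) n).withDensity
        (fun x : PiLp (ENNReal.ofReal p) (fun _ : Fin n => ℝ) => ρ ‖x‖)
        {(0 : PiLp (ENNReal.ofReal p) (fun _ : Fin n => ℝ))} = 0 := by
      rw [withDensity_apply _ (measurableSet_singleton _)]
      exact setLIntegral_measure_zero _ _ (measure_singleton _)
    have hsub : {x : PiLp (ENNReal.ofReal p) (fun _ : Fin n => ℝ) |
          ‖x‖⁻¹ • x ∈ (WithLp.ofLp ⁻¹' B : Set (PiLp (ENNReal.ofReal p) (fun _ : Fin n => ℝ))) ∧ ‖x‖ ∈ A}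
        ⊆ {x : PiLp (ENNReal.ofReal p) (fun _ : Fin n => ℝ) |
            ‖x‖⁻¹ • x ∈ (WithLp.ofLp ⁻¹' B : Set (PiLp (ENNReal.ofReal p) (fun _ : Fin n => ℝ)))
              ∧ ‖x‖ ∈ A ∧ x ≠ 0} ∪ {0} := by
      intro x hx
      by_cases h0 : x = 0
      · exact Or.inr (by simp [h0])
      · exact Or.inl ⟨hx.1, hx.2, h0⟩
    have hsplit : (SZ.volE (ENNReal.ofReal p) n).withDensity
        (fun x : PiLp (ENNReal.ofReal p) (fun _ : Fin n => ℝ) => ρ ‖x‖)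
        {x : PiLp (ENNReal.ofReal p) (fun _ : Fin n => ℝ) |
          ‖x‖⁻¹ • x ∈ (WithLp.ofLp ⁻¹' B : Set (PiLp (ENNReal.ofReal p) (fun _ : Fin n => ℝ))) ∧ ‖x‖ ∈ A}
        = (SZ.volE (ENNReal.ofReal p) n).withDensity
            (fun x : PiLp (ENNReal.ofReal p) (fun _ : Fin n => ℝ) => ρ ‖x‖)
            {x : PiLp (ENNReal.ofReal p) (fun _ : Fin n => ℝ) |
              ‖x‖⁻¹ • x ∈ (WithLp.ofLp ⁻¹' B : Set (PiLp (ENNReal.ofReal p) (fun _ : Fin n => ℝ)))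
                ∧ ‖x‖ ∈ A ∧ x ≠ 0} := by
      refine le_antisymm ((measure_mono hsub).trans
        ((measure_union_le _ _).trans ?_)) (measure_mono fun x hx => ⟨hx.1, hx.2.1⟩)
      rw [hzero, add_zero]
    rw [hsplit]
    exact SZ.core (SZ.volE (ENNReal.ofReal p) n) hρm hB' hA
  -- normalization
  have hone : msph Set.univ * rrad Set.univ = 1 := by
    have h := master Set.univ Set.univ MeasurableSet.univ MeasurableSet.univ
    simpa using h.symm
  have hmtop : msph Set.univ ≠ ⊤ := measure_ne_top _ _
  have hm0 : msph Set.univ ≠ 0 := by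
    intro h
    rw [h, zero_mul] at hone
    exact zero_ne_one hone
  have hrinv : rrad Set.univ = (msph Set.univ)⁻¹ := by
    calc rrad Set.univ = ((msph Set.univ)⁻¹ * msph Set.univ) * rrad Set.univ := by
          rw [ENNReal.inv_mul_cancel hm0 hmtop, one_mul]
      _ = (msph Set.univ)⁻¹ := by rw [mul_assoc, hone, mul_one]
  constructor
  · rw [indepFun_iff_measure_inter_preimage_eq_mul]
    intro s t hs ht
    have e1 := master s t hs ht
    have e2 := master s Set.univ hs MeasurableSet.univ
    have e3 := master Set.univ t MeasurableSet.univ ht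
    simp only [Set.preimage_univ, Set.inter_univ] at e2
    simp only [Set.preimage_univ, Set.univ_inter] at e3
    rw [e1, e2, e3]
    calc msph s * rrad t = (msph s * rrad t) * (msph Set.univ * rrad Set.univ) := by
          rw [hone, mul_one]
      _ = (msph s * rrad Set.univ) * (msph Set.univ * rrad t) := by ring
  · intro B hB
    rw [Measure.map_apply hY hB]
    have e := master B Set.univ hB MeasurableSet.univ
    simp only [Set.preimage_univ, Set.inter_univ] at e
    rw [e, hrinv, ← div_eq_mul_inv]
    have hB' : MeasurableSet (WithLp.ofLp ⁻¹' B : Set (PiLp (ENNReal.ofReal p) (fun _ : Fin n => ℝ))) :=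
        (WithLp.measurable_ofLp _ _) hB
    have hBs : MeasurableSet
        (((↑) : Metric.sphere (0 : PiLp (ENNReal.ofReal p) (fun _ : Fin n => ℝ)) 1 →
          PiLp (ENNReal.ofReal p) (fun _ : Fin n => ℝ)) ⁻¹' (WithLp.ofLp ⁻¹' B : Set (PiLp (ENNReal.ofReal p) (fun _ : Fin n => ℝ)))) :=
      measurable_subtype_coe hB'
    have hnum1 : msph B = (n : ℝ≥0∞) * SZ.volE (ENNReal.ofReal p) n
        (Set.Ioo (0:ℝ) 1 •
          ((Metric.sphere (0 : PiLp (ENNReal.ofReal p) (fun _ : Fin n => ℝ)) 1 :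
            Set (PiLp (ENNReal.ofReal p) (fun _ : Fin n => ℝ))) ∩ (WithLp.ofLp ⁻¹' B : Set (PiLp (ENNReal.ofReal p) (fun _ : Fin n => ℝ))))) := by
      rw [hmsph]
      dsimp only
      rw [Measure.toSphere_apply' _ hBs, Subtype.image_preimage_coe,
        SZ.dim_eq (ENNReal.ofReal p) n]
    have hdenu : msph Set.univ = (n : ℝ≥0∞) * SZ.volE (ENNReal.ofReal p) n
        (Metric.ball (0 : PiLp (ENNReal.ofReal p) (fun _ : Fin n => ℝ)) 1) := by
      rw [hmsph]
      dsimp only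
      rw [Set.preimage_univ, Set.preimage_univ, Measure.toSphere_apply_univ, SZ.dim_eq (ENNReal.ofReal p) n]
    have hvol : ∀ S : Set (PiLp (ENNReal.ofReal p) (fun _ : Fin n => ℝ)),
        (volume : Measure (Fin n → ℝ)) (WithLp.toLp (ENNReal.ofReal p) ⁻¹' S)
          = SZ.volE (ENNReal.ofReal p) n S := fun S => by
      rw [SZ.volE, ← MeasurableEquiv.coe_toLp, MeasurableEquiv.map_apply]
    have hNumEq : {y : Fin n → ℝ | ∃ x ∈ B, (∑ j, |x j| ^ p) ^ (1/p) = 1 ∧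
          ∃ r : ℝ, 0 ≤ r ∧ r ≤ 1 ∧ y = r • x}
        = WithLp.toLp (ENNReal.ofReal p) ⁻¹' (Set.Icc (0:ℝ) 1 •
            ((Metric.sphere (0 : PiLp (ENNReal.ofReal p) (fun _ : Fin n => ℝ)) 1 :
              Set (PiLp (ENNReal.ofReal p) (fun _ : Fin n => ℝ))) ∩ (WithLp.ofLp ⁻¹' B : Set (PiLp (ENNReal.ofReal p) (fun _ : Fin n => ℝ))))) := by
      ext y
      constructor
      · rintro ⟨x, hxB, hx1, r, hr0, hr1, rfl⟩
        exact ⟨r, ⟨hr0, hr1⟩, WithLp.toLp (ENNReal.ofReal p) x,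
          ⟨by rw [mem_sphere_zero_iff_norm, eq_norm x]; exact hx1, hxB⟩, rfl⟩
      · rintro ⟨r, hr, x, ⟨hxs, hxB⟩, hy⟩
        refine ⟨WithLp.ofLp x, hxB, ?_, r, hr.1, hr.2, ?_⟩
        · rw [← eq_norm (WithLp.ofLp x), WithLp.toLp_ofLp, ← mem_sphere_zero_iff_norm]
          exact hxs
        · simpa using (congrArg WithLp.ofLp hy).symm
    have hIccIoo : SZ.volE (ENNReal.ofReal p) n
        (Set.Icc (0:ℝ) 1 •
          ((Metric.sphere (0 : PiLp (ENNReal.ofReal p) (fun _ : Fin n => ℝ)) 1 :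
            Set (PiLp (ENNReal.ofReal p) (fun _ : Fin n => ℝ))) ∩ (WithLp.ofLp ⁻¹' B : Set (PiLp (ENNReal.ofReal p) (fun _ : Fin n => ℝ)))))
        = SZ.volE (ENNReal.ofReal p) n
          (Set.Ioo (0:ℝ) 1 •
            ((Metric.sphere (0 : PiLp (ENNReal.ofReal p) (fun _ : Fin n => ℝ)) 1 :
              Set (PiLp (ENNReal.ofReal p) (fun _ : Fin n => ℝ))) ∩ (WithLp.ofLp ⁻¹' B : Set (PiLp (ENNReal.ofReal p) (fun _ : Fin n => ℝ))))) := by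
      have hsub1 : Set.Ioo (0:ℝ) 1 •
            ((Metric.sphere (0 : PiLp (ENNReal.ofReal p) (fun _ : Fin n => ℝ)) 1 :
              Set (PiLp (ENNReal.ofReal p) (fun _ : Fin n => ℝ))) ∩ (WithLp.ofLp ⁻¹' B : Set (PiLp (ENNReal.ofReal p) (fun _ : Fin n => ℝ))))
          ⊆ Set.Icc (0:ℝ) 1 •
            ((Metric.sphere (0 : PiLp (ENNReal.ofReal p) (fun _ : Fin n => ℝ)) 1 :
              Set (PiLp (ENNReal.ofReal p) (fun _ : Fin n => ℝ))) ∩ (WithLp.ofLp ⁻¹' B : Set (PiLp (ENNReal.ofReal p) (fun _ : Fin n => ℝ)))) := by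
        rintro y ⟨r, hr, x, hx, rfl⟩
        exact ⟨r, Set.Ioo_subset_Icc_self hr, x, hx, rfl⟩
      have hsub2 : Set.Icc (0:ℝ) 1 •
            ((Metric.sphere (0 : PiLp (ENNReal.ofReal p) (fun _ : Fin n => ℝ)) 1 :
              Set (PiLp (ENNReal.ofReal p) (fun _ : Fin n => ℝ))) ∩ (WithLp.ofLp ⁻¹' B : Set (PiLp (ENNReal.ofReal p) (fun _ : Fin n => ℝ))))
          ⊆ (Set.Ioo (0:ℝ) 1 •
              ((Metric.sphere (0 : PiLp (ENNReal.ofReal p) (fun _ : Fin n => ℝ)) 1 :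
                Set (PiLp (ENNReal.ofReal p) (fun _ : Fin n => ℝ))) ∩ (WithLp.ofLp ⁻¹' B : Set (PiLp (ENNReal.ofReal p) (fun _ : Fin n => ℝ)))))
            ∪ ({(0 : PiLp (ENNReal.ofReal p) (fun _ : Fin n => ℝ))} ∪
                (Metric.sphere (0 : PiLp (ENNReal.ofReal p) (fun _ : Fin n => ℝ)) 1 :
                  Set (PiLp (ENNReal.ofReal p) (fun _ : Fin n => ℝ)))) := by
        rintro y ⟨r, hr, x, hx, rfl⟩
        rcases eq_or_lt_of_le hr.1 with h0 | h0
        · refine Or.inr (Or.inl ?_)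
          rw [← h0]
          simp
        · rcases eq_or_lt_of_le hr.2 with h1 | h1
          · refine Or.inr (Or.inr ?_)
            rw [h1]
            simpa using hx.1
          · exact Or.inl ⟨r, ⟨h0, h1⟩, x, hx, rfl⟩
      refine le_antisymm ((measure_mono hsub2).trans
        ((measure_union_le _ _).trans ?_)) (measure_mono hsub1)
      rw [measure_union_null (measure_singleton _)
        ((SZ.volE (ENNReal.ofReal p) n).addHaar_sphere 0 1), add_zero]
    have hDenEq : {x : Fin n → ℝ | (∑ j, |x j| ^ p) ^ (1/p) ≤ 1}
        = WithLp.toLp (ENNReal.ofReal p) ⁻¹'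
          (Metric.closedBall (0 : PiLp (ENNReal.ofReal p) (fun _ : Fin n => ℝ)) 1 :
            Set (PiLp (ENNReal.ofReal p) (fun _ : Fin n => ℝ))) := by
      ext x
      constructor
      · intro hx
        exact mem_closedBall_zero_iff.mpr (by rw [eq_norm x]; exact hx)
      · intro hx
        have h2 : @norm (PiLp (ENNReal.ofReal p) (fun _ : Fin n => ℝ)) _ (WithLp.toLp (ENNReal.ofReal p) x) ≤ 1 :=
          mem_closedBall_zero_iff.mp hx
        rw [eq_norm x] at h2
        exact h2
    have hclosed : SZ.volE (ENNReal.ofReal p) n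
        (Metric.closedBall (0 : PiLp (ENNReal.ofReal p) (fun _ : Fin n => ℝ)) 1)
        = SZ.volE (ENNReal.ofReal p) n
          (Metric.ball (0 : PiLp (ENNReal.ofReal p) (fun _ : Fin n => ℝ)) 1) := by
      refine le_antisymm ?_ (measure_mono Metric.ball_subset_closedBall)
      rw [← Metric.ball_union_sphere]
      refine (measure_union_le _ _).trans ?_
      rw [(SZ.volE (ENNReal.ofReal p) n).addHaar_sphere 0 1, add_zero]
    have hn0 : (n : ℝ≥0∞) ≠ 0 := Nat.cast_ne_zero.mpr (by omega)
    have hntop : (n : ℝ≥0∞) ≠ ⊤ := ENNReal.natCast_ne_top n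
    rw [hnum1, hdenu, ENNReal.mul_div_mul_left _ _ hn0 hntop, hNumEq, hDenEq]
    simp only [hvol]
    rw [hIccIoo, hclosed]
end

section
/- Let X_1,...,X_N be i.i.d. random vectors in R^n and θ ∈ S^{n-1}. Then for every 1 ≤ ℓ ≤ N, E[(1/ℓ) Σ_{k=1}^ℓ k-max_{1≤i≤N}|⟨X_i,θ⟩|] ≥ c · E[max_{1≤i≤⌊N/ℓ⌋}|⟨X_i,θ⟩|] for an absolute constant c > 0. -/
open MeasureTheory ProbabilityTheory Finset Pointwise

lemma le_kmax_of_countP {N : ℕ} (v : Fin N → ℝ) (t : ℝ) (k : ℕ) (hk1 : 1 ≤ k) (hkN : k ≤ N)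
    (h : k ≤ Multiset.countP (fun x => t ≤ x) (Multiset.ofList (List.ofFn v))) :
    t ≤ kmax v k := by
  classical
  by_contra hlt
  push_neg at hlt
  set s : List ℝ := Multiset.sort (Multiset.ofList (List.ofFn v)) (· ≤ ·) with hs
  have hsort : List.Pairwise (· ≤ ·) s := Multiset.pairwise_sort _ _
  have hlen : s.length = N := by simp [hs, Multiset.length_sort]
  have hNk' : N - k < s.length := by omega
  have hkmax : kmax v k = s[N - k] := by
    rw [kmax, ← hs]; exact List.getD_eq_getElem s 0 hNk'
  have hcnt : Multiset.countP (fun x => t ≤ x) (Multiset.ofList (List.ofFn v))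
      = s.countP (fun x => decide (t ≤ x)) := by
    conv_lhs => rw [← Multiset.sort_eq (Multiset.ofList (List.ofFn v)) (· ≤ ·), ← hs]
    rfl
  have hsplit := List.take_append_drop (N - k + 1) s
  have htake : (s.take (N - k + 1)).countP (fun x => decide (t ≤ x)) = 0 := by
    rw [List.countP_eq_zero]
    intro a ha
    rw [List.mem_iff_getElem] at ha
    obtain ⟨j, hj, rfl⟩ := ha
    have hjlt : j < N - k + 1 := lt_of_lt_of_le hj (by simp)
    have hjs : j < s.length := lt_of_lt_of_le hj (by simp)
    rw [List.getElem_take]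
    have h1 : s[j] ≤ s[N - k] := by
      have := hsort.rel_get_of_le (a := ⟨j, hjs⟩) (b := ⟨N - k, hNk'⟩) (by
        simp only [Fin.mk_le_mk]; omega)
      simpa using this
    simp only [decide_eq_true_eq, not_le]
    calc s[j] ≤ s[N - k] := h1
      _ < t := lt_of_eq_of_lt hkmax.symm hlt
  have hdrop : (s.drop (N - k + 1)).countP (fun x => decide (t ≤ x)) ≤ k - 1 := by
    calc (s.drop (N - k + 1)).countP (fun x => decide (t ≤ x))
        ≤ (s.drop (N - k + 1)).length := List.countP_le_length
      _ = k - 1 := by simp [hlen]; omega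
  have : s.countP (fun x => decide (t ≤ x)) ≤ k - 1 := by
    conv_lhs => rw [← hsplit]
    rw [List.countP_append, htake]
    omega
  omega

lemma sum_le_sum_kmax {N ℓ : ℕ} (hℓN : ℓ ≤ N) (v : Fin N → ℝ) (ι : Fin ℓ → Fin N)
    (hι : Function.Injective ι) :
    ∑ j, v (ι j) ≤ ∑ k ∈ Finset.Icc 1 ℓ, kmax v k := by
  classical
  set b : List ℝ := Multiset.sort (Multiset.ofList (List.ofFn (v ∘ ι))) (· ≤ ·) with hb
  have hbsort : List.Pairwise (· ≤ ·) b := Multiset.pairwise_sort _ _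
  have hblen : b.length = ℓ := by simp [hb, Multiset.length_sort]
  -- the chosen values form a sub-multiset of all values
  have hsub : (Multiset.ofList (List.ofFn (v ∘ ι))) ≤ Multiset.ofList (List.ofFn v) := by
    have h1 : List.ofFn (v ∘ ι) = (List.ofFn ι).map v := (List.map_ofFn (f := ι) (g := v)).symm
    have h2 : List.ofFn v = (List.finRange N).map v := List.ofFn_eq_map
    rw [h1, h2]
    have h3 : (Multiset.ofList (List.ofFn ι)) ≤ Multiset.ofList (List.finRange N) := by
      rw [Multiset.le_iff_subset (by simpa using List.nodup_ofFn.2 hι)]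
      intro x _
      simp [List.mem_finRange]
    simpa using Multiset.map_le_map (f := v) h3
  -- main pointwise bound
  have hkey : ∀ i : Fin b.length, b.get i ≤ kmax v (ℓ - (i : ℕ)) := by
    intro i
    set t : ℝ := b.get i with ht
    have hcount : ℓ - (i : ℕ) ≤ Multiset.countP (fun x => t ≤ x)
        (Multiset.ofList (List.ofFn v)) := by
      have hc1 : ℓ - (i : ℕ) ≤ b.countP (fun x => decide (t ≤ x)) := by
        have hdroplen : (b.drop i).length = ℓ - (i : ℕ) := by simp [hblen]
        have hall : (b.drop i).countP (fun x => decide (t ≤ x)) = (b.drop i).length := by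
          rw [List.countP_eq_length]
          intro a ha
          rw [List.mem_iff_getElem] at ha
          obtain ⟨p, hp, rfl⟩ := ha
          rw [List.getElem_drop]
          simp only [decide_eq_true_eq]
          have : (i : ℕ) + p < b.length := by simp at hp; omega
          have := hbsort.rel_get_of_le (a := i) (b := ⟨(i : ℕ) + p, this⟩)
            (by simp only [Fin.le_def]; omega)
          simpa [ht] using this
        calc ℓ - (i : ℕ) = (b.drop i).countP (fun x => decide (t ≤ x)) := by
              rw [hall, hdroplen]
          _ ≤ b.countP (fun x => decide (t ≤ x)) := by
              conv_rhs => rw [← List.take_append_drop (i : ℕ) b]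
              rw [List.countP_append]; omega
      have hc2 : b.countP (fun x => decide (t ≤ x))
          = Multiset.countP (fun x => t ≤ x) (Multiset.ofList (List.ofFn (v ∘ ι))) := by
        conv_rhs => rw [← Multiset.sort_eq (Multiset.ofList (List.ofFn (v ∘ ι))) (· ≤ ·), ← hb]
        rfl
      calc ℓ - (i : ℕ) ≤ b.countP (fun x => decide (t ≤ x)) := hc1
        _ = _ := hc2
        _ ≤ Multiset.countP (fun x => t ≤ x) (Multiset.ofList (List.ofFn v)) :=
            Multiset.countP_le_of_le _ hsub
    exact le_kmax_of_countP v t (ℓ - (i : ℕ)) (by have := i.2; omega)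
      (by omega) hcount
  -- sum of chosen values equals sum over b
  have hsum : ∑ j, v (ι j) = ∑ i : Fin b.length, b.get i := by
    have hperm : b.Perm (List.ofFn (v ∘ ι)) := by
      rw [← Multiset.coe_eq_coe, hb, Multiset.sort_eq]
    calc ∑ j, v (ι j) = (List.ofFn (v ∘ ι)).sum := by rw [List.sum_ofFn]; rfl
      _ = b.sum := (hperm.sum_eq).symm
      _ = (List.ofFn b.get).sum := by rw [List.ofFn_get]
      _ = ∑ i : Fin b.length, b.get i := List.sum_ofFn
  rw [hsum]
  calc ∑ i : Fin b.length, b.get i ≤ ∑ i : Fin b.length, kmax v (ℓ - (i : ℕ)) :=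
        Finset.sum_le_sum fun i _ => hkey i
    _ = ∑ r ∈ Finset.range ℓ, kmax v (ℓ - r) := by
        rw [Fin.sum_univ_eq_sum_range (fun r => kmax v (ℓ - r)) b.length, hblen]
    _ = ∑ k ∈ Finset.Icc 1 ℓ, kmax v k := by
        rw [← Finset.sum_range_reflect]
        rw [← Finset.Ico_add_one_right_eq_Icc, Finset.sum_Ico_eq_sum_range]
        refine Finset.sum_congr (by simp) fun r hr => ?_
        rw [Finset.mem_range] at hr
        congr 1
        omega

lemma iIndepFun_precomp {Ω : Type} [MeasurableSpace Ω] {P : Measure Ω} {β : Type*}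
    [MeasurableSpace β] {N m : ℕ} {X : Fin N → Ω → β}
    (h : iIndepFun X P) (f : Fin m → Fin N)
    (hf : Function.Injective f) :
    iIndepFun (fun t => X (f t)) P := by
  classical
  rw [iIndepFun_iff_measure_inter_preimage_eq_mul] at h ⊢
  intro S sets hsets
  set g : Fin N → Set β := fun i => if hi : ∃ t ∈ S, f t = i then sets hi.choose else Set.univ
    with hg
  have hgf : ∀ t ∈ S, g (f t) = sets t := by
    intro t ht
    have hex : ∃ t' ∈ S, f t' = f t := ⟨t, ht, rfl⟩
    have : hex.choose = t := hf hex.choose_spec.2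
    simp only [hg, dif_pos hex, this]
  have hmeas : ∀ i ∈ S.image f, MeasurableSet (g i) := by
    intro i hi
    rw [Finset.mem_image] at hi
    obtain ⟨t, ht, rfl⟩ := hi
    rw [hgf t ht]; exact hsets t ht
  have h1 := h (S.image f) hmeas
  have h2 : (⋂ i ∈ S.image f, X i ⁻¹' g i) = ⋂ t ∈ S, X (f t) ⁻¹' sets t := by
    rw [Finset.set_biInter_finset_image]
    exact Set.iInter₂_congr fun t ht => by rw [hgf t ht]
  have h3 : (∏ i ∈ S.image f, P (X i ⁻¹' g i)) = ∏ t ∈ S, P (X (f t) ⁻¹' sets t) := by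
    rw [Finset.prod_image (fun a _ b _ hab => hf hab)]
    exact Finset.prod_congr rfl fun t ht => by rw [hgf t ht]
  rw [← h2, ← h3]; exact h1

lemma map_fun_eq_pi {Ω : Type} [MeasurableSpace Ω] (P : Measure Ω) [IsProbabilityMeasure P]
    {m : ℕ} (Y : Fin m → Ω → ℝ) (hm : ∀ t, Measurable (Y t))
    (h : iIndepFun Y P) :
    Measure.map (fun ω t => Y t ω) P = Measure.pi (fun t => Measure.map (Y t) P) := by
  haveI : ∀ t, IsProbabilityMeasure (Measure.map (Y t) P) :=
    fun t => Measure.isProbabilityMeasure_map (hm t).aemeasurable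
  refine (Measure.pi_eq fun s hs => ?_).symm
  rw [Measure.map_apply (measurable_pi_lambda _ hm) (MeasurableSet.univ_pi hs)]
  have hpre : (fun ω t => Y t ω) ⁻¹' Set.pi Set.univ s = ⋂ t ∈ Finset.univ, Y t ⁻¹' s t := by
    ext ω; simp [Set.mem_pi]
  rw [hpre, h.measure_inter_preimage_eq_mul Finset.univ (fun t _ => hs t)]
  exact Finset.prod_congr rfl fun t _ => (Measure.map_apply (hm t) (hs t)).symm


/-- for i.i.d. random vectors X₁,…,X_N and a unit vector θ,
`E[(1/ℓ) ∑_{k=1}^ℓ k-max_i |⟨X_i,θ⟩|] ≥ c E[max_{1≤i≤⌊N/ℓ⌋} |⟨X_i,θ⟩|]` for an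
absolute constant c > 0 (the maximum over the first ⌊N/ℓ⌋ indices is written
as a supremum over indices i < N/ℓ, padded by 0). -/
theorem stmt15 :
    ∃ c : ℝ, 0 < c ∧
      ∀ (n N ℓ : ℕ), 1 ≤ ℓ → ℓ ≤ N →
        ∀ (Ω : Type) (_ : MeasurableSpace Ω) (P : Measure Ω), IsProbabilityMeasure P →
          ∀ X : Fin N → Ω → (Fin n → ℝ), (∀ i, Measurable (X i)) →
            iIndepFun X P →
            (∀ i j, Measure.map (X i) P = Measure.map (X j) P) →
            ∀ θ : Fin n → ℝ, (∑ j, θ j ^ 2 = 1) →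
            Integrable (fun ω =>
              (ℓ : ℝ)⁻¹ * ∑ k ∈ Finset.Icc 1 ℓ, kmax (fun i => |ip (X i ω) θ|) k) P →
            Integrable (fun ω => ⨆ i : Fin N,
              if (i : ℕ) < N / ℓ then |ip (X i ω) θ| else 0) P →
            c * ∫ ω, (⨆ i : Fin N,
                if (i : ℕ) < N / ℓ then |ip (X i ω) θ| else 0) ∂P ≤
              ∫ ω, (ℓ : ℝ)⁻¹ *
                ∑ k ∈ Finset.Icc 1 ℓ, kmax (fun i => |ip (X i ω) θ|) k ∂P := by
  refine ⟨1, one_pos, ?_⟩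
  intro n N ℓ hℓ1 hℓN Ω mΩ P hP X hX hind hid θ hθ hInt1 hInt2
  classical
  set m := N / ℓ with hm
  have hm1 : 1 ≤ m := (Nat.one_le_div_iff (by omega)).2 hℓN
  have hN1 : 1 ≤ N := le_trans hℓ1 hℓN
  have hmul : ℓ * m ≤ N := by rw [hm, mul_comm]; exact Nat.div_mul_le_self N ℓ
  have hℓ0 : (ℓ : ℝ) ≠ 0 := Nat.cast_ne_zero.2 (by omega)
  haveI : Nonempty (Fin m) := ⟨⟨0, by omega⟩⟩
  haveI : Nonempty (Fin ℓ) := ⟨⟨0, by omega⟩⟩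
  have hemb : ∀ (j : Fin ℓ) (t : Fin m), (j : ℕ) * m + (t : ℕ) < N := by
    intro j t
    have h1 : (j : ℕ) + 1 ≤ ℓ := j.2
    calc (j : ℕ) * m + (t : ℕ) < (j : ℕ) * m + m := by have := t.2; omega
      _ = ((j : ℕ) + 1) * m := by ring
      _ ≤ ℓ * m := Nat.mul_le_mul_right m h1
      _ ≤ N := hmul
  set emb : Fin ℓ → Fin m → Fin N := fun j t => ⟨(j : ℕ) * m + (t : ℕ), hemb j t⟩ with hembdef
  set v : Ω → Fin N → ℝ := fun ω i => |ip (X i ω) θ| with hv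
  set M : Fin ℓ → Ω → ℝ := fun j ω => ⨆ t : Fin m, v ω (emb j t) with hM
  -- basic measurability
  have hipm : Measurable (fun x : Fin n → ℝ => |ip x θ|) := by
    have : Measurable (fun x : Fin n → ℝ => ip x θ) := by
      unfold ip
      exact Finset.measurable_sum _ fun j _ => (measurable_pi_apply j).mul_const _
    exact this.abs
  have hvmeas : ∀ i : Fin N, Measurable (fun ω => v ω i) := fun i => hipm.comp (hX i)
  have hbdd : ∀ (ω : Ω) (j : Fin ℓ), BddAbove (Set.range fun t : Fin m => v ω (emb j t)) :=
    fun ω j => Set.Finite.bddAbove (Set.finite_range _)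
  have hMnn : ∀ (j : Fin ℓ) (ω : Ω), 0 ≤ M j ω := by
    intro j ω
    exact le_trans (abs_nonneg _) (le_ciSup (hbdd ω j) (Classical.arbitrary (Fin m)))
  have hMmeas : ∀ j, Measurable (M j) := by
    intro j
    have h0 : M j = Finset.univ.sup' Finset.univ_nonempty
        fun t : Fin m => (fun ω => v ω (emb j t)) := by
      funext ω
      rw [Finset.sup'_apply, Finset.sup'_univ_eq_ciSup]
    rw [h0]
    exact Finset.measurable_sup' Finset.univ_nonempty fun t _ => hvmeas (emb j t)
  -- pointwise bound
  have hpt : ∀ ω, ∑ j : Fin ℓ, M j ω ≤ ∑ k ∈ Finset.Icc 1 ℓ, kmax (v ω) k := by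
    intro ω
    have hexmax : ∀ j : Fin ℓ, ∃ t : Fin m, ∀ s : Fin m, v ω (emb j s) ≤ v ω (emb j t) := by
      intro j
      obtain ⟨t, _, ht⟩ := Finset.exists_max_image Finset.univ
        (fun t : Fin m => v ω (emb j t)) Finset.univ_nonempty
      exact ⟨t, fun s => ht s (Finset.mem_univ s)⟩
    choose t ht using hexmax
    have hMj : ∀ j, M j ω = v ω (emb j (t j)) := fun j =>
      le_antisymm (ciSup_le (ht j)) (le_ciSup (hbdd ω j) (t j))
    have hinj : Function.Injective (fun j : Fin ℓ => emb j (t j)) := by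
      intro j j' he
      have hval : (j : ℕ) * m + ((t j : Fin m) : ℕ) = (j' : ℕ) * m + ((t j' : Fin m) : ℕ) :=
        congrArg Fin.val he
      have hj : ((m : ℕ) * (j : ℕ) + ((t j : Fin m) : ℕ)) / m = (j : ℕ) := by
        rw [Nat.mul_add_div (by omega), Nat.div_eq_of_lt (t j).2, Nat.add_zero]
      have hj' : ((m : ℕ) * (j' : ℕ) + ((t j' : Fin m) : ℕ)) / m = (j' : ℕ) := by
        rw [Nat.mul_add_div (by omega), Nat.div_eq_of_lt (t j').2, Nat.add_zero]
      have : (j : ℕ) = (j' : ℕ) := by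
        rw [← hj, ← hj', mul_comm m (j : ℕ), mul_comm m (j' : ℕ), hval]
      exact Fin.ext this
    calc ∑ j : Fin ℓ, M j ω = ∑ j : Fin ℓ, v ω (emb j (t j)) :=
          Finset.sum_congr rfl fun j _ => hMj j
      _ ≤ ∑ k ∈ Finset.Icc 1 ℓ, kmax (v ω) k := sum_le_sum_kmax hℓN (v ω) _ hinj
  -- integrability of the sum of kmax's
  have hgInt : Integrable (fun ω => ∑ k ∈ Finset.Icc 1 ℓ, kmax (v ω) k) P := by
    have h0 := hInt1.const_mul (ℓ : ℝ)
    have : (fun ω => (ℓ : ℝ) * ((ℓ : ℝ)⁻¹ * ∑ k ∈ Finset.Icc 1 ℓ,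
        kmax (fun i => |ip (X i ω) θ|) k)) = fun ω => ∑ k ∈ Finset.Icc 1 ℓ, kmax (v ω) k := by
      funext ω
      rw [← mul_assoc, mul_inv_cancel₀ hℓ0, one_mul]
    rwa [this] at h0
  have hMInt : ∀ j, Integrable (M j) P := by
    intro j
    refine hgInt.mono' (hMmeas j).aestronglyMeasurable (ae_of_all _ fun ω => ?_)
    rw [Real.norm_eq_abs, abs_of_nonneg (hMnn j ω)]
    calc M j ω ≤ ∑ j' : Fin ℓ, M j' ω :=
          Finset.single_le_sum (fun j' _ => hMnn j' ω) (Finset.mem_univ j)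
      _ ≤ _ := hpt ω
  -- equal expectations of block maxima
  set i₀ : Fin N := ⟨0, by omega⟩ with hi₀
  set μ0 : Measure ℝ := Measure.map (fun ω => |ip (X i₀ ω) θ|) P with hμ0
  have hmap : ∀ i : Fin N, Measure.map (fun ω => |ip (X i ω) θ|) P = μ0 := by
    intro i
    show Measure.map ((fun x : Fin n → ℝ => |ip x θ|) ∘ (X i)) P
      = Measure.map ((fun x : Fin n → ℝ => |ip x θ|) ∘ (X i₀)) P
    rw [← Measure.map_map hipm (hX i), ← Measure.map_map hipm (hX i₀), hid i i₀]
  have hkey : ∀ j : Fin ℓ,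
      Measure.map (fun ω (t : Fin m) => |ip (X (emb j t) ω) θ|) P
        = Measure.pi (fun _ => μ0) := by
    intro j
    have hinjt : Function.Injective fun t : Fin m => emb j t := by
      intro s s' he
      have : (j : ℕ) * m + (s : ℕ) = (j : ℕ) * m + (s' : ℕ) := by
        simpa [hembdef, Fin.ext_iff] using he
      exact Fin.ext (by omega)
    have h1 := iIndepFun_precomp hind _ hinjt
    have h2 := h1.comp (fun _ => fun x : Fin n → ℝ => |ip x θ|) (fun _ => hipm)
    have h3 := map_fun_eq_pi P (fun t ω => |ip (X (emb j t) ω) θ|)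
      (fun t => hipm.comp (hX _)) h2
    rw [h3]
    congr 1
    funext t
    exact hmap (emb j t)
  have hF : Measurable (fun w : Fin m → ℝ => ⨆ t, w t) := by
    have h0 : (fun w : Fin m → ℝ => ⨆ t, w t)
        = Finset.univ.sup' Finset.univ_nonempty fun t : Fin m => (fun w : Fin m → ℝ => w t) := by
      funext w
      rw [Finset.sup'_apply, Finset.sup'_univ_eq_ciSup]
    rw [h0]
    exact Finset.measurable_sup' Finset.univ_nonempty fun t _ => measurable_pi_apply t
  have hEM : ∀ j : Fin ℓ, ∫ ω, M j ω ∂P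
      = ∫ w : Fin m → ℝ, (⨆ t, w t) ∂(Measure.pi fun _ : Fin m => μ0) := by
    intro j
    have hY : Measurable (fun ω (t : Fin m) => |ip (X (emb j t) ω) θ|) :=
      measurable_pi_lambda _ fun t => hipm.comp (hX _)
    rw [← hkey j, integral_map hY.aemeasurable hF.aestronglyMeasurable]
  -- identify the statement's supremum with M j₀
  set j₀ : Fin ℓ := ⟨0, by omega⟩ with hj₀
  haveI : Nonempty (Fin N) := ⟨⟨0, by omega⟩⟩
  have hsup0 : ∀ ω, (⨆ i : Fin N, if (i : ℕ) < m then |ip (X i ω) θ| else 0) = M j₀ ω := by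
    intro ω
    refine le_antisymm ?_ ?_
    · refine ciSup_le fun i => ?_
      by_cases h : (i : ℕ) < m
      · rw [if_pos h]
        have hie : i = emb j₀ ⟨(i : ℕ), h⟩ := by
          apply Fin.ext; simp [hembdef, hj₀]
        calc |ip (X i ω) θ| = v ω (emb j₀ ⟨(i : ℕ), h⟩) := by
              show _ = |ip (X (emb j₀ ⟨(i : ℕ), h⟩) ω) θ|
              rw [← hie]
          _ ≤ M j₀ ω := le_ciSup (hbdd ω j₀) _
      · rw [if_neg h]
        exact hMnn j₀ ω
    · refine ciSup_le fun s => ?_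
      have hlt : ((emb j₀ s : Fin N) : ℕ) < m := by
        simp [hembdef, hj₀]
      have h5 : v ω (emb j₀ s) = if ((emb j₀ s : Fin N) : ℕ) < m
          then |ip (X (emb j₀ s) ω) θ| else 0 := by rw [if_pos hlt]
      rw [h5]
      exact le_ciSup (f := fun i : Fin N => if (i : ℕ) < m then |ip (X i ω) θ| else 0)
        (Set.Finite.bddAbove (Set.finite_range _)) (emb j₀ s)
  -- put everything together
  rw [one_mul]
  have e1 : ∫ ω, (⨆ i : Fin N, if (i : ℕ) < m then |ip (X i ω) θ| else 0) ∂P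
      = ∫ ω, M j₀ ω ∂P := by
    exact integral_congr_ae (ae_of_all _ hsup0)
  have e2 : ∫ ω, M j₀ ω ∂P = (ℓ : ℝ)⁻¹ * ∑ j : Fin ℓ, ∫ ω, M j ω ∂P := by
    have : ∑ j : Fin ℓ, ∫ ω, M j ω ∂P = ℓ * ∫ ω, M j₀ ω ∂P := by
      rw [Finset.sum_congr rfl fun j _ => (hEM j).trans (hEM j₀).symm]
      rw [Finset.sum_const, Finset.card_univ, Fintype.card_fin, nsmul_eq_mul]
    rw [this, ← mul_assoc, inv_mul_cancel₀ hℓ0, one_mul]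
  have e3 : (ℓ : ℝ)⁻¹ * ∑ j : Fin ℓ, ∫ ω, M j ω ∂P
      = ∫ ω, (ℓ : ℝ)⁻¹ * ∑ j : Fin ℓ, M j ω ∂P := by
    rw [← integral_finset_sum _ (fun j _ => hMInt j), ← integral_const_mul]
  have e4 : ∫ ω, (ℓ : ℝ)⁻¹ * ∑ j : Fin ℓ, M j ω ∂P
      ≤ ∫ ω, (ℓ : ℝ)⁻¹ * ∑ k ∈ Finset.Icc 1 ℓ, kmax (fun i => |ip (X i ω) θ|) k ∂P := by
    refine integral_mono_of_nonneg (ae_of_all _ fun ω => ?_) hInt1 (ae_of_all _ fun ω => ?_)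
    · exact mul_nonneg (inv_nonneg.2 (Nat.cast_nonneg ℓ))
        (Finset.sum_nonneg fun j _ => hMnn j ω)
    · exact mul_le_mul_of_nonneg_left (hpt ω) (inv_nonneg.2 (Nat.cast_nonneg ℓ))
  rw [e1, e2, e3]
  exact e4
end

section
/- Let X_1,...,X_N be i.i.d. random vectors in R^n with distribution μ, q ≥ 1 with e^q ≤ N, and θ ∈ S^{n-1}. Partition {1,...,N} into m = ⌊N/e^q⌋ blocks σ_1,...,σ_m each of size ≥ e^q. Then E[ (N^{-1} Σ_{i=1}^N |⟨X_i,θ⟩|^q)^{1/q} ] ≥ (m/N)^{1/q} · min_{1≤j≤m} E[max_{i ∈ σ_j} |⟨X_i,θ⟩|], and since m ≥ N/(2e^q), the prefactor (m/N)^{1/q} is at least (2)^{-1/q} e^{-1} ≥ 1/(2e). -/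
open MeasureTheory ProbabilityTheory Finset Pointwise

/-- block lower bound. For i.i.d. X₁,…,X_N, a unit vector θ,
q ≥ 1 with e^q ≤ N, m = ⌊N/e^q⌋ and a partition σ₁,…,σ_m of {1,…,N} into
blocks of size ≥ e^q,
`E[(N⁻¹ ∑ᵢ |⟨X_i,θ⟩|^q)^{1/q}] ≥ (m/N)^{1/q} · min_j E[max_{i∈σⱼ} |⟨X_i,θ⟩|]`,
and the prefactor satisfies `(m/N)^{1/q} ≥ 1/(2e)`. -/
theorem stmt17 {n N m : ℕ} (q : ℝ) (hq : 1 ≤ q) (hqN : Real.exp q ≤ N)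
    (hm : m = ⌊(N : ℝ) / Real.exp q⌋₊) (hm1 : 1 ≤ m)
    (σ : Fin m → Finset (Fin N))
    (hdisj : ∀ j j', j ≠ j' → Disjoint (σ j) (σ j'))
    (hcover : Finset.univ.biUnion σ = Finset.univ)
    (hcard : ∀ j, Real.exp q ≤ ((σ j).card : ℝ))
    {Ω : Type} [MeasurableSpace Ω] (P : Measure Ω) [IsProbabilityMeasure P]
    (X : Fin N → Ω → (Fin n → ℝ)) (hmeas : ∀ i, Measurable (X i))
    (hindep : iIndepFun X P)
    (hident : ∀ i j, Measure.map (X i) P = Measure.map (X j) P)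
    (θ : Fin n → ℝ) (hθ : ∑ j, θ j ^ 2 = 1)
    (hint1 : Integrable (fun ω => ((N : ℝ)⁻¹ * ∑ i, |ip (X i ω) θ| ^ q) ^ (1/q)) P)
    (hint2 : ∀ j, Integrable (fun ω => ⨆ i ∈ σ j, |ip (X i ω) θ|) P) :
    ((m : ℝ) / N) ^ (1/q) *
        (⨅ j : Fin m, ∫ ω, (⨆ i ∈ σ j, |ip (X i ω) θ|) ∂P) ≤
      (∫ ω, ((N : ℝ)⁻¹ * ∑ i, |ip (X i ω) θ| ^ q) ^ (1/q) ∂P) ∧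
      (2 * Real.exp 1)⁻¹ ≤ ((m : ℝ) / N) ^ (1/q) := by
  have hq0 : (0:ℝ) < q := lt_of_lt_of_le one_pos hq
  have hq0' : q ≠ 0 := ne_of_gt hq0
  have hNpos : (0:ℝ) < N := lt_of_lt_of_le (Real.exp_pos q) hqN
  have hmpos : (0:ℝ) < (m:ℝ) := by exact_mod_cast hm1
  have hcpos : (0:ℝ) < ((m:ℝ)/N) ^ (1/q) :=
    Real.rpow_pos_of_pos (div_pos hmpos hNpos) _
  set c : ℝ := ((m:ℝ)/N) ^ (1/q) with hc
  constructor
  · -- main inequality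
    set a : Ω → Fin N → ℝ := fun ω i => |ip (X i ω) θ| with ha
    have hann : ∀ ω i, 0 ≤ a ω i := fun ω i => abs_nonneg _
    set T : Fin m → Ω → ℝ := fun j ω => ⨆ i ∈ σ j, |ip (X i ω) θ| with hT
    have hσne : ∀ j, (σ j).Nonempty := by
      intro j
      rw [← Finset.card_pos]
      have : (0:ℝ) < ((σ j).card : ℝ) := lt_of_lt_of_le (Real.exp_pos q) (hcard j)
      exact_mod_cast this
    have hTnn : ∀ j ω, 0 ≤ T j ω := by
      intro j ω
      obtain ⟨i₀, hi₀⟩ := hσne j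
      have h1 : a ω i₀ ≤ ⨆ _ : i₀ ∈ σ j, a ω i₀ := by
        haveI : Nonempty (i₀ ∈ σ j) := ⟨hi₀⟩
        rw [ciSup_const]
      have h2 : (⨆ _ : i₀ ∈ σ j, a ω i₀) ≤ T j ω :=
        le_ciSup (f := fun i => ⨆ _ : i ∈ σ j, a ω i)
          (Set.Finite.bddAbove (Set.finite_range _)) i₀
      exact le_trans (hann ω i₀) (le_trans h1 h2)
    have hTle : ∀ j ω, T j ω ^ q ≤ ∑ i ∈ σ j, a ω i ^ q := by
      intro j ω
      set S : ℝ := ∑ i ∈ σ j, a ω i ^ q with hS'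
      have hSnn : 0 ≤ S := Finset.sum_nonneg fun i _ => Real.rpow_nonneg (hann ω i) q
      have hBnn : 0 ≤ S ^ (1/q) := Real.rpow_nonneg hSnn _
      have hTB : T j ω ≤ S ^ (1/q) := by
        refine Real.iSup_le (fun i => Real.iSup_le (fun hi => ?_) hBnn) hBnn
        have h1 : a ω i ^ q ≤ S :=
          Finset.single_le_sum (f := fun i => a ω i ^ q)
            (fun i _ => Real.rpow_nonneg (hann ω i) q) hi
        calc a ω i = (a ω i ^ q) ^ (1/q) := by
              rw [one_div, Real.rpow_rpow_inv (hann ω i) hq0']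
          _ ≤ S ^ (1/q) :=
              Real.rpow_le_rpow (Real.rpow_nonneg (hann ω i) q) h1
                (by positivity)
      calc T j ω ^ q ≤ (S ^ (1/q)) ^ q :=
            Real.rpow_le_rpow (hTnn j ω) hTB (le_of_lt hq0)
        _ = S := by rw [one_div, Real.rpow_inv_rpow hSnn hq0']
    have hsum : ∀ ω, ∑ j : Fin m, ∑ i ∈ σ j, a ω i ^ q = ∑ i, a ω i ^ q := by
      intro ω
      rw [← Finset.sum_biUnion (fun j _ j' _ hjj' => hdisj j j' hjj'), hcover]
    set g : Ω → ℝ := fun ω => c * ((m:ℝ)⁻¹ * ∑ j, T j ω) with hg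
    have hpt : ∀ ω, g ω ≤ ((N : ℝ)⁻¹ * ∑ i, a ω i ^ q) ^ (1/q) := by
      intro ω
      have h1 : ∑ j : Fin m, T j ω ^ q ≤ ∑ i, a ω i ^ q := by
        rw [← hsum ω]
        exact Finset.sum_le_sum fun j _ => hTle j ω
      have hw' : ∑ _j : Fin m, (m:ℝ)⁻¹ = 1 := by
        rw [Finset.sum_const, Finset.card_univ, Fintype.card_fin, nsmul_eq_mul,
          mul_inv_cancel₀ (ne_of_gt hmpos)]
      have h2 : ∑ j, (m:ℝ)⁻¹ * T j ω ≤ (∑ j, (m:ℝ)⁻¹ * T j ω ^ q) ^ (1/q) :=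
        Real.arith_mean_le_rpow_mean Finset.univ _ _
          (fun j _ => inv_nonneg.mpr (le_of_lt hmpos)) hw'
          (fun j _ => hTnn j ω) hq
      have hSq : (0:ℝ) ≤ (m:ℝ)⁻¹ * ∑ j, T j ω ^ q := by
        refine mul_nonneg (inv_nonneg.mpr (le_of_lt hmpos))
          (Finset.sum_nonneg fun j _ => Real.rpow_nonneg (hTnn j ω) q)
      calc g ω = c * ((m:ℝ)⁻¹ * ∑ j, T j ω) := rfl
        _ ≤ c * ((m:ℝ)⁻¹ * ∑ j, T j ω ^ q) ^ (1/q) := by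
            refine mul_le_mul_of_nonneg_left ?_ (le_of_lt hcpos)
            simpa only [Finset.mul_sum] using h2
        _ = (((m:ℝ)/N) * ((m:ℝ)⁻¹ * ∑ j, T j ω ^ q)) ^ (1/q) := by
            rw [Real.mul_rpow (le_of_lt (div_pos hmpos hNpos)) hSq]
        _ = ((N:ℝ)⁻¹ * ∑ j, T j ω ^ q) ^ (1/q) := by
            congr 1
            field_simp
        _ ≤ ((N : ℝ)⁻¹ * ∑ i, a ω i ^ q) ^ (1/q) := by
            refine Real.rpow_le_rpow ?_ ?_ (by positivity)
            · refine mul_nonneg (inv_nonneg.mpr (le_of_lt hNpos))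
                (Finset.sum_nonneg fun j _ => Real.rpow_nonneg (hTnn j ω) q)
            · exact mul_le_mul_of_nonneg_left h1 (inv_nonneg.mpr (le_of_lt hNpos))
    have hTint : ∀ j, Integrable (T j) P := hint2
    have hsumint : Integrable (fun ω => ∑ j, T j ω) P :=
      integrable_finset_sum Finset.univ fun j _ => hTint j
    have hgint : Integrable g P := (hsumint.const_mul _).const_mul c
    have hImono : ∫ ω, g ω ∂P ≤ ∫ ω, ((N : ℝ)⁻¹ * ∑ i, a ω i ^ q) ^ (1/q) ∂P :=
      integral_mono hgint hint1 hpt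
    have hIg : ∫ ω, g ω ∂P = c * ((m:ℝ)⁻¹ * ∑ j, ∫ ω, T j ω ∂P) := by
      rw [hg]
      rw [integral_const_mul, integral_const_mul, integral_finset_sum _ (fun j _ => hTint j)]
    set I : Fin m → ℝ := fun j => ∫ ω, T j ω ∂P with hI
    have hinf : (⨅ j : Fin m, I j) ≤ (m:ℝ)⁻¹ * ∑ j, I j := by
      have h1 : (m:ℝ) * (⨅ j : Fin m, I j) ≤ ∑ j, I j := by
        have h2 : ∑ _j : Fin m, (⨅ j : Fin m, I j) ≤ ∑ j, I j :=
          Finset.sum_le_sum fun j _ => ciInf_le (Set.Finite.bddBelow (Set.finite_range I)) j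
        simpa [Finset.sum_const, Finset.card_univ, nsmul_eq_mul] using h2
      calc (⨅ j : Fin m, I j) = (m:ℝ)⁻¹ * ((m:ℝ) * ⨅ j : Fin m, I j) := by
            rw [← mul_assoc, inv_mul_cancel₀ (ne_of_gt hmpos), one_mul]
        _ ≤ (m:ℝ)⁻¹ * ∑ j, I j :=
            mul_le_mul_of_nonneg_left h1 (inv_nonneg.mpr (le_of_lt hmpos))
    calc c * (⨅ j : Fin m, I j) ≤ c * ((m:ℝ)⁻¹ * ∑ j, I j) :=
          mul_le_mul_of_nonneg_left hinf (le_of_lt hcpos)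
      _ = ∫ ω, g ω ∂P := hIg.symm
      _ ≤ _ := hImono
  · -- prefactor bound
    have hx1 : (1:ℝ) ≤ (N:ℝ)/Real.exp q := (one_le_div (Real.exp_pos q)).mpr hqN
    have hfloor : (N:ℝ)/Real.exp q - 1 < (m:ℝ) := by
      rw [hm]; exact Nat.sub_one_lt_floor _
    have hhalf : (N:ℝ)/Real.exp q / 2 ≤ (m:ℝ) := by
      rcases le_or_gt 2 ((N:ℝ)/Real.exp q) with h | h
      · linarith
      · have : (1:ℝ) ≤ (m:ℝ) := by exact_mod_cast hm1
        linarith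
    have key : (2 * Real.exp q)⁻¹ ≤ (m:ℝ)/N := by
      rw [le_div_iff₀ hNpos]
      have heq : (2 * Real.exp q)⁻¹ * N = (N:ℝ)/Real.exp q / 2 := by
        rw [div_div, div_eq_mul_inv, mul_comm, mul_comm (Real.exp q) 2]
      rw [heq]; exact hhalf
    have h1 : ((2 * Real.exp q)⁻¹ : ℝ) ^ (1/q) ≤ c :=
      Real.rpow_le_rpow (by positivity) key (by positivity)
    have h2 : ((2 * Real.exp q)⁻¹ : ℝ) ^ (1/q)
        = ((2:ℝ) ^ (1/q) * Real.exp 1)⁻¹ := by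
      rw [Real.inv_rpow (by positivity), Real.mul_rpow (by norm_num) (le_of_lt (Real.exp_pos q))]
      congr 2
      rw [← Real.exp_one_rpow q, ← Real.rpow_mul (le_of_lt (Real.exp_pos 1)),
        mul_one_div, div_self hq0', Real.rpow_one]
    have h3 : (2 * Real.exp 1)⁻¹ ≤ ((2:ℝ) ^ (1/q) * Real.exp 1)⁻¹ := by
      refine inv_anti₀ (by positivity) ?_
      refine mul_le_mul_of_nonneg_right ?_ (le_of_lt (Real.exp_pos 1))
      calc (2:ℝ) ^ (1/q) ≤ (2:ℝ) ^ (1:ℝ) :=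
            Real.rpow_le_rpow_of_exponent_le one_le_two (by rw [div_le_one hq0]; exact hq)
        _ = 2 := Real.rpow_one 2
    calc (2 * Real.exp 1)⁻¹ ≤ ((2:ℝ) ^ (1/q) * Real.exp 1)⁻¹ := h3
      _ = ((2 * Real.exp q)⁻¹ : ℝ) ^ (1/q) := h2.symm
      _ ≤ c := h1
end
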